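/- arXiv:2604.20189 — 3 statements merged into one kernel-verified Lean document; each statement's English description precedes it below -/
import Mathlib

section
/- Assume S′∖S ≠ ∅. Then for every i ∈ 𝕀 one has δ₂(w_i) ≥ deg(w_i) + 1, and for every integer n₁ with 0 ≤ n₁ ≤ δ₂(w_i) − deg(w_i) − 1 one has δ₁(ω₁(i) + n₁d) ≥ deg(w_i) + n₁ + 1. Moreover, S′∖S = 𝓛′, where 𝓛′ := {w_i + (n₁d, n₂d) : i ∈ 𝕀, 0 ≤ n₁ ≤ δ₂(w_i) − deg(w_i) − 1, 0 ≤ n₂ ≤ δ₁(ω₁(i)+n₁d) − deg(w_i) − n₁ − 1}. Consequently, max{deg(u) : u ∈ S′∖S} = max{deg(u) : u ∈ 𝓛}, where 𝓛 ⊆ 𝓛′ consists of the elements with n₂ = δ₁(ω₁(i)+n₁d) − deg(w_i) − n₁ − 1, and the cardinality of S′∖S equals the cardinality of 𝓛′. -/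
namespace ProjMonomialCurve

/-- The numerical semigroup generated by `a 1, …, a k` (equivalently by `A₁ = {0,a 1,…,a k}`). -/
def S1 (k : ℕ) (a : ℕ → ℕ) : Set ℕ :=
  {n | ∃ x : ℕ → ℕ, n = ∑ i ∈ Finset.Icc 1 k, x i * a i}

/-- The numerical semigroup generated by the nonzero elements `d - a i` (`0 ≤ i ≤ k-1`)
of `A₂`, where `d = a k`. -/
def S2 (k : ℕ) (a : ℕ → ℕ) : Set ℕ :=
  {n | ∃ x : ℕ → ℕ, n = ∑ i ∈ Finset.range k, x i * (a k - a i)}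

/-- `δ₁ n`: least total number of summands over representations `n = ∑ xᵢ aᵢ`. -/
noncomputable def delta1 (k : ℕ) (a : ℕ → ℕ) (n : ℕ) : ℕ :=
  sInf {m | ∃ x : ℕ → ℕ, n = ∑ i ∈ Finset.Icc 1 k, x i * a i ∧ m = ∑ i ∈ Finset.Icc 1 k, x i}

/-- `δ₂ n`: least total number of summands over representations of `n` by the
nonzero elements of `A₂`. -/
noncomputable def delta2 (k : ℕ) (a : ℕ → ℕ) (n : ℕ) : ℕ :=
  sInf {m | ∃ x : ℕ → ℕ,
    n = ∑ i ∈ Finset.range k, x i * (a k - a i) ∧ m = ∑ i ∈ Finset.range k, x i}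

/-- `ω₁ i`: the least element of `S₍₁₎` congruent to `i` modulo `d = a k`. -/
noncomputable def omega1 (k : ℕ) (a : ℕ → ℕ) (i : ℕ) : ℕ :=
  sInf {n | n ∈ S1 k a ∧ n % a k = i % a k}

/-- `ω₂ i`: the least element of `S₍₂₎` congruent to `i` modulo `d = a k`. -/
noncomputable def omega2 (k : ℕ) (a : ℕ → ℕ) (i : ℕ) : ℕ :=
  sInf {n | n ∈ S2 k a ∧ n % a k = i % a k}

/-- `w i = (ω₁(i), ω₂(d-i))`. -/
noncomputable def w (k : ℕ) (a : ℕ → ℕ) (i : ℕ) : ℕ × ℕ :=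
  (omega1 k a i, omega2 k a (a k - i))

/-- `e h = (h, d - h)`. -/
def e (k : ℕ) (a : ℕ → ℕ) (h : ℕ) : ℕ × ℕ := (h, a k - h)

/-- The affine semigroup `S ⊆ ℕ²` generated by `e (a 0), …, e (a k)`. -/
def S (k : ℕ) (a : ℕ → ℕ) : Set (ℕ × ℕ) :=
  {u | ∃ x : ℕ → ℕ, u = ∑ i ∈ Finset.range (k+1), x i • e k a (a i)}

/-- `S' = {u ∈ ℕ² | u + p•e₀ ∈ S and u + p•e_d ∈ S for some p ∈ ℕ}`. -/
def S' (k : ℕ) (a : ℕ → ℕ) : Set (ℕ × ℕ) :=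
  {u | ∃ p : ℕ, u + p • e k a 0 ∈ S k a ∧ u + p • e k a (a k) ∈ S k a}

/-- `deg u = (u₁ + u₂)/d` for `u ∈ ℕ²`. -/
def deg (k : ℕ) (a : ℕ → ℕ) (u : ℕ × ℕ) : ℕ := (u.1 + u.2) / a k

/-- The index set `𝕀`. -/
noncomputable def II (k : ℕ) (a : ℕ → ℕ) : Set ℕ :=
  {i | 1 ≤ i ∧ i ≤ a k - 1 ∧ (∀ j, 1 ≤ j → j ≤ k - 1 → i ≠ a j) ∧
    deg k a (w k a i) < delta1 k a (w k a i).1}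

/-- `T = {u ∈ ℤ² | d ∣ u₁+u₂, u₁ ∉ S₍₁₎, u₂ ∉ S₍₂₎}`. -/
def T (k : ℕ) (a : ℕ → ℕ) : Set (ℤ × ℤ) :=
  {u | (a k : ℤ) ∣ u.1 + u.2 ∧ (∀ n ∈ S1 k a, (n : ℤ) ≠ u.1) ∧ (∀ n ∈ S2 k a, (n : ℤ) ≠ u.2)}

/-- `deg` for integer points. -/
def degZ (k : ℕ) (a : ℕ → ℕ) (u : ℤ × ℤ) : ℤ := (u.1 + u.2) / (a k : ℤ)

/-- The Castelnuovo–Mumford regularity, expressed combinatorially: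
`max({deg u + 1 : u ∈ S'∖S} ∪ {deg u + 2 : u ∈ T})`. -/
noncomputable def reg (k : ℕ) (a : ℕ → ℕ) : ℤ :=
  sSup ({z : ℤ | ∃ u ∈ S' k a \ S k a, z = (deg k a u : ℤ) + 1} ∪
        {z : ℤ | ∃ u ∈ T k a, z = degZ k a u + 2})

/-- Frobenius number of `S₍₁₎` (greatest integer not in it; `-1` if the semigroup is all of `ℕ`). -/
noncomputable def F1 (k : ℕ) (a : ℕ → ℕ) : ℤ :=
  sSup {z : ℤ | ∀ n ∈ S1 k a, (n : ℤ) ≠ z}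

/-- Frobenius number of `S₍₂₎`. -/
noncomputable def F2 (k : ℕ) (a : ℕ → ℕ) : ℤ :=
  sSup {z : ℤ | ∀ n ∈ S2 k a, (n : ℤ) ≠ z}

/-- The largest gap `λ_max = max_{1 ≤ i ≤ k} (a i - a (i-1) - 1)`. -/
def lamMax (k : ℕ) (a : ℕ → ℕ) : ℕ :=
  (Finset.Icc 1 k).sup (fun i => a i - a (i-1) - 1)

/-- The second largest gap: the minimum over `i` of the largest gap among indices `≠ i`. -/
noncomputable def lamSl (k : ℕ) (a : ℕ → ℕ) : ℕ :=
  sInf {m | ∃ i, 1 ≤ i ∧ i ≤ k ∧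
    m = ((Finset.Icc 1 k).erase i).sup (fun j => a j - a (j-1) - 1)}

/-- The set `A₁ = {a 0, a 1, …, a k}`. -/
def A1set (k : ℕ) (a : ℕ → ℕ) : Set ℕ := {m | ∃ j ≤ k, a j = m}


section Lemmas
variable {k : ℕ} {a : ℕ → ℕ}

lemma a_mono (hmono : ∀ i, i < k → a i < a (i+1)) :
    ∀ {i j : ℕ}, i ≤ j → j ≤ k → a i ≤ a j := by
  intro i j hij hjk
  induction j with
  | zero => simp [Nat.le_zero.mp hij]
  | succ n ih =>
    rcases Nat.lt_or_ge i (n+1) with h | h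
    · exact le_trans (ih (by omega) (by omega)) (le_of_lt (hmono n (by omega)))
    · have : i = n + 1 := by omega
      simp [this]

lemma a_lt (hmono : ∀ i, i < k → a i < a (i+1)) {i j : ℕ} (hij : i < j) (hjk : j ≤ k) :
    a i < a j := by
  have h1 : a i < a (i+1) := hmono i (by omega)
  exact lt_of_lt_of_le h1 (a_mono hmono hij hjk)

lemma d_pos (hk : 3 ≤ k) (ha0 : a 0 = 0) (hmono : ∀ i, i < k → a i < a (i+1)) :
    0 < a k := by
  have := a_lt hmono (show 0 < k by omega) le_rfl
  omega

lemma sum_split {M : Type*} [AddCommMonoid M] (f : ℕ → M) :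
    ∑ i ∈ Finset.range (k+1), f i = f 0 + ∑ i ∈ Finset.Icc 1 k, f i := by
  have h : Finset.range (k+1) = insert 0 (Finset.Icc 1 k) := by
    ext x; simp only [Finset.mem_range, Finset.mem_insert, Finset.mem_Icc]; omega
  rw [h, Finset.sum_insert (by simp)]

lemma F_fst (ha0 : a 0 = 0) (x : ℕ → ℕ) :
    (∑ i ∈ Finset.range (k+1), x i • e k a (a i)).1 = ∑ i ∈ Finset.Icc 1 k, x i * a i := by
  rw [Prod.fst_sum, sum_split]
  simp [e, ha0]

lemma F_snd (x : ℕ → ℕ) :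
    (∑ i ∈ Finset.range (k+1), x i • e k a (a i)).2
      = ∑ i ∈ Finset.range k, x i * (a k - a i) := by
  rw [Prod.snd_sum, Finset.sum_range_succ]
  simp [e]

lemma F_sum (hmono : ∀ i, i < k → a i < a (i+1)) (x : ℕ → ℕ) :
    (∑ i ∈ Finset.range (k+1), x i • e k a (a i)).1
      + (∑ i ∈ Finset.range (k+1), x i • e k a (a i)).2
      = (∑ i ∈ Finset.range (k+1), x i) * a k := by
  rw [Prod.fst_sum, Prod.snd_sum, ← Finset.sum_add_distrib, Finset.sum_mul]
  refine Finset.sum_congr rfl ?_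
  intro i hi
  have hik : i ≤ k := by simpa [Nat.lt_succ_iff] using hi
  have hle : a i ≤ a k := a_mono hmono hik le_rfl
  simp only [e, smul_eq_mul, Prod.smul_fst, Prod.smul_snd]
  rw [← Nat.mul_add, Nat.add_sub_cancel' hle]

end Lemmas

section Lemmas2
variable {k : ℕ} {a : ℕ → ℕ}

lemma delta1_le {n : ℕ} (x : ℕ → ℕ) (h : n = ∑ i ∈ Finset.Icc 1 k, x i * a i) :
    delta1 k a n ≤ ∑ i ∈ Finset.Icc 1 k, x i :=
  Nat.sInf_le ⟨x, h, rfl⟩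

lemma delta2_le {n : ℕ} (x : ℕ → ℕ) (h : n = ∑ i ∈ Finset.range k, x i * (a k - a i)) :
    delta2 k a n ≤ ∑ i ∈ Finset.range k, x i :=
  Nat.sInf_le ⟨x, h, rfl⟩

lemma delta1_spec {n : ℕ} (h : n ∈ S1 k a) :
    ∃ x : ℕ → ℕ, n = ∑ i ∈ Finset.Icc 1 k, x i * a i ∧
      delta1 k a n = ∑ i ∈ Finset.Icc 1 k, x i := by
  obtain ⟨x, hx⟩ := h
  have hne : {m | ∃ x : ℕ → ℕ, n = ∑ i ∈ Finset.Icc 1 k, x i * a i ∧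
      m = ∑ i ∈ Finset.Icc 1 k, x i}.Nonempty := ⟨_, x, hx, rfl⟩
  exact Nat.sInf_mem hne

lemma delta2_spec {n : ℕ} (h : n ∈ S2 k a) :
    ∃ x : ℕ → ℕ, n = ∑ i ∈ Finset.range k, x i * (a k - a i) ∧
      delta2 k a n = ∑ i ∈ Finset.range k, x i := by
  obtain ⟨x, hx⟩ := h
  have hne : {m | ∃ x : ℕ → ℕ, n = ∑ i ∈ Finset.range k, x i * (a k - a i) ∧
      m = ∑ i ∈ Finset.range k, x i}.Nonempty := ⟨_, x, hx, rfl⟩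
  exact Nat.sInf_mem hne

lemma mem_S_iff1 (hk : 3 ≤ k) (ha0 : a 0 = 0)
    (hmono : ∀ i, i < k → a i < a (i+1)) {u : ℕ × ℕ} :
    u ∈ S k a ↔ a k ∣ u.1 + u.2 ∧ u.1 ∈ S1 k a ∧ delta1 k a u.1 ≤ deg k a u := by
  have hd : 0 < a k := d_pos hk ha0 hmono
  constructor
  · rintro ⟨x, rfl⟩
    set F := ∑ i ∈ Finset.range (k+1), x i • e k a (a i) with hF
    have hs := F_sum hmono x
    rw [← hF] at hs
    have hdeg : deg k a F = ∑ i ∈ Finset.range (k+1), x i := by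
      rw [deg, hs, Nat.mul_div_cancel _ hd]
    refine ⟨⟨_, by rw [hs, Nat.mul_comm]⟩, ⟨x, F_fst ha0 x⟩, ?_⟩
    rw [hdeg]
    calc delta1 k a F.1 ≤ ∑ i ∈ Finset.Icc 1 k, x i := delta1_le x (F_fst ha0 x)
      _ ≤ ∑ i ∈ Finset.range (k+1), x i := by rw [sum_split]; omega
  · rintro ⟨hdvd, h1, hle⟩
    obtain ⟨x, hx, ht⟩ := delta1_spec h1
    set m := deg k a u with hm
    set t := ∑ i ∈ Finset.Icc 1 k, x i with htdef
    have htm : t ≤ m := ht ▸ hle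
    set x' := Function.update x 0 (m - t) with hx'
    have hx'Icc : ∀ i ∈ Finset.Icc 1 k, x' i = x i := by
      intro i hi
      have : i ≠ 0 := by simp [Finset.mem_Icc] at hi; omega
      simp [hx', Function.update_of_ne this]
    refine ⟨x', ?_⟩
    set F := ∑ i ∈ Finset.range (k+1), x' i • e k a (a i) with hF
    have hfst : F.1 = u.1 := by
      rw [F_fst ha0 x', Finset.sum_congr rfl (fun i hi => by rw [hx'Icc i hi]), ← hx]
    have hcount : ∑ i ∈ Finset.range (k+1), x' i = m := by
      rw [sum_split, Finset.sum_congr rfl hx'Icc, ← htdef]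
      simp [hx', Function.update_self]
      omega
    have hmd : m * a k = u.1 + u.2 := by
      rw [hm, deg, Nat.div_mul_cancel hdvd]
    have hs := F_sum hmono x'
    rw [← hF] at hs
    rw [hcount, hmd, hfst] at hs
    have : F.2 = u.2 := by omega
    exact (Prod.ext hfst this).symm

lemma mem_S_iff2 (hk : 3 ≤ k) (ha0 : a 0 = 0)
    (hmono : ∀ i, i < k → a i < a (i+1)) {u : ℕ × ℕ} :
    u ∈ S k a ↔ a k ∣ u.1 + u.2 ∧ u.2 ∈ S2 k a ∧ delta2 k a u.2 ≤ deg k a u := by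
  have hd : 0 < a k := d_pos hk ha0 hmono
  constructor
  · rintro ⟨x, rfl⟩
    set F := ∑ i ∈ Finset.range (k+1), x i • e k a (a i) with hF
    have hs := F_sum hmono x
    rw [← hF] at hs
    have hdeg : deg k a F = ∑ i ∈ Finset.range (k+1), x i := by
      rw [deg, hs, Nat.mul_div_cancel _ hd]
    refine ⟨⟨_, by rw [hs, Nat.mul_comm]⟩, ⟨x, F_snd x⟩, ?_⟩
    rw [hdeg]
    calc delta2 k a F.2 ≤ ∑ i ∈ Finset.range k, x i := delta2_le x (F_snd x)
      _ ≤ ∑ i ∈ Finset.range (k+1), x i := by rw [Finset.sum_range_succ]; omega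
  · rintro ⟨hdvd, h2, hle⟩
    obtain ⟨x, hx, ht⟩ := delta2_spec h2
    set m := deg k a u with hm
    set t := ∑ i ∈ Finset.range k, x i with htdef
    have htm : t ≤ m := ht ▸ hle
    set x' := Function.update x k (m - t) with hx'
    have hx'rk : ∀ i ∈ Finset.range k, x' i = x i := by
      intro i hi
      have : i ≠ k := by simp [Finset.mem_range] at hi; omega
      simp [hx', Function.update_of_ne this]
    refine ⟨x', ?_⟩
    set F := ∑ i ∈ Finset.range (k+1), x' i • e k a (a i) with hF
    have hsnd : F.2 = u.2 := by
      rw [F_snd x', Finset.sum_congr rfl (fun i hi => by rw [hx'rk i hi]), ← hx]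
    have hcount : ∑ i ∈ Finset.range (k+1), x' i = m := by
      rw [Finset.sum_range_succ, Finset.sum_congr rfl hx'rk, ← htdef]
      simp [hx', Function.update_self]
      omega
    have hmd : m * a k = u.1 + u.2 := by
      rw [hm, deg, Nat.div_mul_cancel hdvd]
    have hs := F_sum hmono x'
    rw [← hF] at hs
    rw [hcount, hmd, hsnd] at hs
    have : F.1 = u.1 := by omega
    exact (Prod.ext this hsnd).symm

end Lemmas2

section Lemmas3
variable {k : ℕ} {a : ℕ → ℕ}

lemma gcd_eq_nat_gcd (m n : ℕ) : GCDMonoid.gcd m n = Nat.gcd m n := rfl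

lemma bezout (s : Finset ℕ) (f : ℕ → ℕ) :
    ∃ c : ℕ → ℤ, ((s.gcd f : ℕ) : ℤ) = ∑ i ∈ s, c i * f i := by
  classical
  induction s using Finset.induction with
  | empty => exact ⟨0, by simp⟩
  | @insert j s hj ih =>
    obtain ⟨c, hc⟩ := ih
    refine ⟨Function.update (fun t => c t * Nat.gcdB (f j) (s.gcd f)) j
      (Nat.gcdA (f j) (s.gcd f)), ?_⟩
    rw [Finset.sum_insert hj, Function.update_self]
    have hrest : ∑ i ∈ s, (Function.update (fun t => c t * Nat.gcdB (f j) (s.gcd f)) j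
        (Nat.gcdA (f j) (s.gcd f))) i * f i
        = (∑ i ∈ s, c i * f i) * Nat.gcdB (f j) (s.gcd f) := by
      rw [Finset.sum_mul]
      refine Finset.sum_congr rfl ?_
      intro i hi
      have hij : i ≠ j := fun h => hj (h ▸ hi)
      rw [Function.update_of_ne hij]
      ring
    rw [hrest, ← hc, Finset.gcd_insert, gcd_eq_nat_gcd]
    rw [Nat.gcd_eq_gcd_ab (f j) (s.gcd f)]
    ring
end Lemmas3

section Lemmas4
variable {k : ℕ} {a : ℕ → ℕ}

lemma residue_cover (s : Finset ℕ) (f : ℕ → ℕ) {d : ℕ} (hd : 0 < d)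
    (hg : s.gcd f = 1) (r : ℕ) :
    ∃ x : ℕ → ℕ, (∑ i ∈ s, x i * f i) % d = r % d := by
  obtain ⟨c, hc⟩ := bezout s f
  rw [hg] at hc
  push_cast at hc
  have hdz : (d : ℤ) ≠ 0 := by exact_mod_cast hd.ne'
  refine ⟨fun i => ((r * c i) % (d : ℤ)).toNat, ?_⟩
  have key : ((∑ i ∈ s, ((r * c i) % (d : ℤ)).toNat * f i : ℕ) : ZMod d) = (r : ZMod d) := by
    push_cast
    have h1 : ∀ i ∈ s, ((((r * c i) % (d : ℤ)).toNat : ZMod d)) * (f i : ZMod d)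
        = ((r : ZMod d) * (c i : ZMod d)) * (f i : ZMod d) := by
      intro i _
      congr 1
      have h2 : ((((r * c i) % (d : ℤ)).toNat : ℤ) : ZMod d)
          = (((r * c i) % (d : ℤ) : ℤ) : ZMod d) := by
        rw [Int.toNat_of_nonneg (Int.emod_nonneg _ hdz)]
      rw [Int.cast_natCast] at h2
      rw [h2, ZMod.intCast_mod]
      push_cast
      ring
    rw [Finset.sum_congr rfl h1]
    have h3 : ((1 : ℤ) : ZMod d) = ((∑ i ∈ s, c i * (f i : ℤ) : ℤ) : ZMod d) :=
      congrArg _ hc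
    push_cast at h3
    calc ∑ i ∈ s, (r : ZMod d) * (c i : ZMod d) * (f i : ZMod d)
        = (r : ZMod d) * ∑ i ∈ s, (c i : ZMod d) * (f i : ZMod d) := by
          rw [Finset.mul_sum]
          exact Finset.sum_congr rfl (fun i _ => by ring)
      _ = (r : ZMod d) * 1 := by rw [← h3]
      _ = (r : ZMod d) := by ring
  exact (ZMod.natCast_eq_natCast_iff _ _ _).mp key

lemma S1_res (hk : 3 ≤ k) (ha0 : a 0 = 0) (hmono : ∀ i, i < k → a i < a (i+1))
    (hgcd : (Finset.Icc 1 k).gcd a = 1) (r : ℕ) :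
    ∃ n, n ∈ S1 k a ∧ n % a k = r % a k := by
  obtain ⟨x, hx⟩ := residue_cover (Finset.Icc 1 k) a (d_pos hk ha0 hmono) hgcd r
  exact ⟨_, ⟨x, rfl⟩, hx⟩

lemma gcd2_eq_one (hk : 3 ≤ k) (ha0 : a 0 = 0) (hmono : ∀ i, i < k → a i < a (i+1))
    (hgcd : (Finset.Icc 1 k).gcd a = 1) :
    (Finset.range k).gcd (fun i => a k - a i) = 1 := by
  set g := (Finset.range k).gcd (fun i => a k - a i) with hg
  have hk0 : 0 < k := by omega
  have hgd : g ∣ a k := by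
    have := Finset.gcd_dvd (f := fun i => a k - a i) (Finset.mem_range.mpr hk0)
    simpa [ha0] using this
  have hdvd : ∀ j ∈ Finset.Icc 1 k, g ∣ a j := by
    intro j hj
    rw [Finset.mem_Icc] at hj
    rcases eq_or_lt_of_le hj.2 with h | h
    · rw [h]; exact hgd
    · have h1 : g ∣ a k - a j := Finset.gcd_dvd (f := fun i => a k - a i)
        (Finset.mem_range.mpr h)
      have h2 : a j ≤ a k := a_mono hmono hj.2 le_rfl
      have h3 : a j = a k - (a k - a j) := by omega
      rw [h3]
      exact Nat.dvd_sub hgd h1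
  have : g ∣ (Finset.Icc 1 k).gcd a := Finset.dvd_gcd hdvd
  rw [hgcd] at this
  exact Nat.dvd_one.mp this

lemma S2_res (hk : 3 ≤ k) (ha0 : a 0 = 0) (hmono : ∀ i, i < k → a i < a (i+1))
    (hgcd : (Finset.Icc 1 k).gcd a = 1) (r : ℕ) :
    ∃ n, n ∈ S2 k a ∧ n % a k = r % a k := by
  obtain ⟨x, hx⟩ := residue_cover (Finset.range k) (fun i => a k - a i)
    (d_pos hk ha0 hmono) (gcd2_eq_one hk ha0 hmono hgcd) r
  exact ⟨_, ⟨x, rfl⟩, hx⟩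

lemma omega1_mem (hk : 3 ≤ k) (ha0 : a 0 = 0) (hmono : ∀ i, i < k → a i < a (i+1))
    (hgcd : (Finset.Icc 1 k).gcd a = 1) (r : ℕ) :
    omega1 k a r ∈ S1 k a ∧ omega1 k a r % a k = r % a k := by
  obtain ⟨n, hn⟩ := S1_res hk ha0 hmono hgcd r
  exact Nat.sInf_mem (⟨n, hn⟩ : {n | n ∈ S1 k a ∧ n % a k = r % a k}.Nonempty)

lemma omega2_mem (hk : 3 ≤ k) (ha0 : a 0 = 0) (hmono : ∀ i, i < k → a i < a (i+1))
    (hgcd : (Finset.Icc 1 k).gcd a = 1) (r : ℕ) :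
    omega2 k a r ∈ S2 k a ∧ omega2 k a r % a k = r % a k := by
  obtain ⟨n, hn⟩ := S2_res hk ha0 hmono hgcd r
  exact Nat.sInf_mem (⟨n, hn⟩ : {n | n ∈ S2 k a ∧ n % a k = r % a k}.Nonempty)

lemma omega1_min {r n : ℕ} (h1 : n ∈ S1 k a) (h2 : n % a k = r % a k) :
    omega1 k a r ≤ n := Nat.sInf_le ⟨h1, h2⟩

lemma omega2_min {r n : ℕ} (h1 : n ∈ S2 k a) (h2 : n % a k = r % a k) :
    omega2 k a r ≤ n := Nat.sInf_le ⟨h1, h2⟩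

end Lemmas4

section Lemmas5
variable {k : ℕ} {a : ℕ → ℕ}

lemma S1_add_d (hk : 3 ≤ k) {n : ℕ} (h : n ∈ S1 k a) :
    n + a k ∈ S1 k a ∧ delta1 k a (n + a k) ≤ delta1 k a n + 1 := by
  obtain ⟨x, hx, ht⟩ := delta1_spec h
  have hkmem : k ∈ Finset.Icc 1 k := by simp; omega
  set x' := Function.update x k (x k + 1) with hx'
  have herase : ∀ i ∈ (Finset.Icc 1 k).erase k, x' i = x i := by
    intro i hi
    have : i ≠ k := (Finset.mem_erase.mp hi).1
    simp [hx', Function.update_of_ne this]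
  have hsum : ∑ i ∈ Finset.Icc 1 k, x' i * a i = n + a k := by
    rw [← Finset.add_sum_erase _ _ hkmem]
    rw [← Finset.add_sum_erase _ (fun i => x i * a i) hkmem] at hx
    have h2 : ∑ i ∈ (Finset.Icc 1 k).erase k, x' i * a i
        = ∑ i ∈ (Finset.Icc 1 k).erase k, x i * a i :=
      Finset.sum_congr rfl (fun i hi => by rw [herase i hi])
    rw [h2]
    simp only [hx', Function.update_self]
    rw [hx]
    ring
  have hcount : ∑ i ∈ Finset.Icc 1 k, x' i = (∑ i ∈ Finset.Icc 1 k, x i) + 1 := by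
    rw [← Finset.add_sum_erase _ _ hkmem, ← Finset.add_sum_erase _ x hkmem,
      Finset.sum_congr rfl herase]
    simp only [hx', Function.update_self]
    ring
  refine ⟨⟨x', hsum.symm⟩, ?_⟩
  calc delta1 k a (n + a k) ≤ ∑ i ∈ Finset.Icc 1 k, x' i := delta1_le x' hsum.symm
    _ = delta1 k a n + 1 := by rw [hcount, ht]

lemma S1_add_mul_d (hk : 3 ≤ k) {n : ℕ} (h : n ∈ S1 k a) (p : ℕ) :
    n + p * a k ∈ S1 k a ∧ delta1 k a (n + p * a k) ≤ delta1 k a n + p := by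
  induction p with
  | zero => simpa using h
  | succ q ih =>
    have := S1_add_d hk ih.1
    have harr : n + q * a k + a k = n + (q+1) * a k := by ring
    rw [harr] at this
    exact ⟨this.1, le_trans this.2 (by omega)⟩

lemma S2_add_d (hk : 3 ≤ k) (ha0 : a 0 = 0) {n : ℕ} (h : n ∈ S2 k a) :
    n + a k ∈ S2 k a ∧ delta2 k a (n + a k) ≤ delta2 k a n + 1 := by
  obtain ⟨x, hx, ht⟩ := delta2_spec h
  have hkmem : (0 : ℕ) ∈ Finset.range k := by simp; omega
  set x' := Function.update x 0 (x 0 + 1) with hx'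
  have herase : ∀ i ∈ (Finset.range k).erase 0, x' i = x i := by
    intro i hi
    have : i ≠ 0 := (Finset.mem_erase.mp hi).1
    simp [hx', Function.update_of_ne this]
  have hsum : ∑ i ∈ Finset.range k, x' i * (a k - a i) = n + a k := by
    rw [← Finset.add_sum_erase _ _ hkmem]
    rw [← Finset.add_sum_erase _ (fun i => x i * (a k - a i)) hkmem] at hx
    have h2 : ∑ i ∈ (Finset.range k).erase 0, x' i * (a k - a i)
        = ∑ i ∈ (Finset.range k).erase 0, x i * (a k - a i) :=
      Finset.sum_congr rfl (fun i hi => by rw [herase i hi])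
    rw [h2]
    simp only [hx', Function.update_self, ha0, Nat.sub_zero]
    rw [hx]
    simp only [ha0, Nat.sub_zero]
    ring
  have hcount : ∑ i ∈ Finset.range k, x' i = (∑ i ∈ Finset.range k, x i) + 1 := by
    rw [← Finset.add_sum_erase _ _ hkmem, ← Finset.add_sum_erase _ x hkmem,
      Finset.sum_congr rfl herase]
    simp only [hx', Function.update_self]
    ring
  refine ⟨⟨x', hsum.symm⟩, ?_⟩
  calc delta2 k a (n + a k) ≤ ∑ i ∈ Finset.range k, x' i := delta2_le x' hsum.symm
    _ = delta2 k a n + 1 := by rw [hcount, ht]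

lemma S2_add_mul_d (hk : 3 ≤ k) (ha0 : a 0 = 0) {n : ℕ} (h : n ∈ S2 k a) (p : ℕ) :
    n + p * a k ∈ S2 k a ∧ delta2 k a (n + p * a k) ≤ delta2 k a n + p := by
  induction p with
  | zero => simpa using h
  | succ q ih =>
    have := S2_add_d hk ha0 ih.1
    have harr : n + q * a k + a k = n + (q+1) * a k := by ring
    rw [harr] at this
    exact ⟨this.1, le_trans this.2 (by omega)⟩

lemma zero_mem_S1 : (0 : ℕ) ∈ S1 k a := ⟨0, by simp⟩

lemma delta1_zero : delta1 k a 0 = 0 :=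
  Nat.le_zero.mp (by simpa using delta1_le (a := a) (0 : ℕ → ℕ) (by simp))

lemma single_mem_S1 {j : ℕ} (hj : 1 ≤ j) (hjk : j ≤ k) :
    a j ∈ S1 k a ∧ delta1 k a (a j) ≤ 1 := by
  classical
  set x : ℕ → ℕ := fun t => if t = j then 1 else 0 with hx
  have hjmem : j ∈ Finset.Icc 1 k := Finset.mem_Icc.mpr ⟨hj, hjk⟩
  have hsum : ∑ i ∈ Finset.Icc 1 k, x i * a i = a j := by
    rw [Finset.sum_eq_single_of_mem j hjmem]
    · simp [hx]
    · intro i _ hij; simp [hx, hij]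
  have hcount : ∑ i ∈ Finset.Icc 1 k, x i = 1 := by
    rw [Finset.sum_eq_single_of_mem j hjmem]
    · simp [hx]
    · intro i _ hij; simp [hx, hij]
  exact ⟨⟨x, hsum.symm⟩, by calc delta1 k a (a j) ≤ _ := delta1_le x hsum.symm
    _ = 1 := hcount⟩

end Lemmas5

section Lemmas6
variable {k : ℕ} {a : ℕ → ℕ}

lemma e_zero : e k a 0 = (0, a k) := by simp [e]

lemma e_d : e k a (a k) = (a k, 0) := by simp [e]

lemma mem_S'_iff (hk : 3 ≤ k) (ha0 : a 0 = 0)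
    (hmono : ∀ i, i < k → a i < a (i+1)) {u : ℕ × ℕ} :
    u ∈ S' k a ↔ a k ∣ u.1 + u.2 ∧ u.1 ∈ S1 k a ∧ u.2 ∈ S2 k a := by
  have hd : 0 < a k := d_pos hk ha0 hmono
  have key : ∀ p : ℕ, u + p • e k a 0 = (u.1, u.2 + p * a k) := by
    intro p
    rw [e_zero]
    ext <;> simp
  have key2 : ∀ p : ℕ, u + p • e k a (a k) = (u.1 + p * a k, u.2) := by
    intro p
    rw [e_d]
    ext <;> simp
  have hdegp : ∀ p : ℕ, deg k a (u.1, u.2 + p * a k) = deg k a u + p := by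
    intro p
    have heq : u.1 + (u.2 + p * a k) = (u.1 + u.2) + p * a k := by ring
    simp only [deg, heq, Nat.add_mul_div_right _ _ hd]
  have hdegp2 : ∀ p : ℕ, deg k a (u.1 + p * a k, u.2) = deg k a u + p := by
    intro p
    have heq : (u.1 + p * a k) + u.2 = (u.1 + u.2) + p * a k := by ring
    simp only [deg, heq, Nat.add_mul_div_right _ _ hd]
  constructor
  · rintro ⟨p, h1, h2⟩
    rw [key p] at h1
    rw [key2 p] at h2
    obtain ⟨hdvd, hS1, -⟩ := (mem_S_iff1 hk ha0 hmono).mp h1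
    obtain ⟨-, hS2, -⟩ := (mem_S_iff2 hk ha0 hmono).mp h2
    refine ⟨?_, hS1, hS2⟩
    have heq : u.1 + (u.2 + p * a k) = (u.1 + u.2) + p * a k := by ring
    simp only [heq] at hdvd
    have := Nat.dvd_sub hdvd (dvd_mul_left (a k) p)
    simpa using this
  · rintro ⟨hdvd, h1, h2⟩
    set p := delta1 k a u.1 + delta2 k a u.2 with hp
    refine ⟨p, ?_, ?_⟩
    · rw [key p, mem_S_iff1 hk ha0 hmono]
      refine ⟨?_, h1, ?_⟩
      · have heq : u.1 + (u.2 + p * a k) = (u.1 + u.2) + p * a k := by ring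
        simp only [heq]
        exact dvd_add hdvd (dvd_mul_left (a k) p)
      · rw [hdegp p]
        show delta1 k a u.1 ≤ deg k a u + p
        omega
    · rw [key2 p, mem_S_iff2 hk ha0 hmono]
      refine ⟨?_, h2, ?_⟩
      · have heq : (u.1 + p * a k) + u.2 = (u.1 + u.2) + p * a k := by ring
        simp only [heq]
        exact dvd_add hdvd (dvd_mul_left (a k) p)
      · rw [hdegp2 p]
        show delta2 k a u.2 ≤ deg k a u + p
        omega

lemma SS_iff (hk : 3 ≤ k) (ha0 : a 0 = 0)
    (hmono : ∀ i, i < k → a i < a (i+1)) {u : ℕ × ℕ} :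
    u ∈ S' k a \ S k a ↔ a k ∣ u.1 + u.2 ∧ u.1 ∈ S1 k a ∧ u.2 ∈ S2 k a ∧
      deg k a u < delta1 k a u.1 ∧ deg k a u < delta2 k a u.2 := by
  constructor
  · rintro ⟨hS', hS⟩
    obtain ⟨hdvd, h1, h2⟩ := (mem_S'_iff hk ha0 hmono).mp hS'
    refine ⟨hdvd, h1, h2, ?_, ?_⟩
    · by_contra hle
      exact hS ((mem_S_iff1 hk ha0 hmono).mpr ⟨hdvd, h1, by omega⟩)
    · by_contra hle
      exact hS ((mem_S_iff2 hk ha0 hmono).mpr ⟨hdvd, h2, by omega⟩)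
  · rintro ⟨hdvd, h1, h2, hlt1, hlt2⟩
    refine ⟨(mem_S'_iff hk ha0 hmono).mpr ⟨hdvd, h1, h2⟩, fun hS => ?_⟩
    obtain ⟨-, -, hle⟩ := (mem_S_iff1 hk ha0 hmono).mp hS
    omega

lemma w_dvd (hk : 3 ≤ k) (ha0 : a 0 = 0) (hmono : ∀ i, i < k → a i < a (i+1))
    (hgcd : (Finset.Icc 1 k).gcd a = 1) {i : ℕ} (hi : i ≤ a k) :
    a k ∣ (w k a i).1 + (w k a i).2 := by
  have h1 := (omega1_mem hk ha0 hmono hgcd i).2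
  have h2 := (omega2_mem hk ha0 hmono hgcd (a k - i)).2
  apply Nat.dvd_of_mod_eq_zero
  show ((w k a i).1 + (w k a i).2) % a k = 0
  simp only [w]
  rw [Nat.add_mod, h1, h2, ← Nat.add_mod]
  have : i + (a k - i) = a k := by omega
  rw [this, Nat.mod_self]

lemma deg_shift (hk : 3 ≤ k) (ha0 : a 0 = 0) (hmono : ∀ i, i < k → a i < a (i+1))
    {v : ℕ × ℕ} (hdvd : a k ∣ v.1 + v.2) (n1 n2 : ℕ) :
    deg k a (v + (n1 * a k, n2 * a k)) = deg k a v + n1 + n2 := by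
  have hd : 0 < a k := d_pos hk ha0 hmono
  obtain ⟨q, hq⟩ := hdvd
  have h1 : (v + (n1 * a k, n2 * a k)).1 + (v + (n1 * a k, n2 * a k)).2
      = a k * (q + n1 + n2) := by
    simp only [Prod.fst_add, Prod.snd_add]
    have : v.1 + n1 * a k + (v.2 + n2 * a k) = (v.1 + v.2) + (n1 + n2) * a k := by ring
    rw [this, hq]
    ring
  rw [deg, h1, Nat.mul_div_cancel_left _ hd, deg, hq, Nat.mul_div_cancel_left _ hd]

lemma decomp1 {m : ℕ} (hk : 3 ≤ k) (ha0 : a 0 = 0) (hmono : ∀ i, i < k → a i < a (i+1))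
    (hgcd : (Finset.Icc 1 k).gcd a = 1) (h : m ∈ S1 k a) :
    ∃ n1 : ℕ, m = omega1 k a (m % a k) + n1 * a k := by
  have hres : m % a k = (m % a k) % a k := (Nat.mod_mod_of_dvd m dvd_rfl).symm
  have hle : omega1 k a (m % a k) ≤ m := omega1_min h hres
  have hmod : omega1 k a (m % a k) % a k = m % a k :=
    (omega1_mem hk ha0 hmono hgcd (m % a k)).2.trans hres.symm
  have hmeq : Nat.ModEq (a k) (omega1 k a (m % a k)) m := by
    unfold Nat.ModEq
    rw [hmod]
  obtain ⟨t, ht⟩ := (Nat.modEq_iff_dvd' hle).mp hmeq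
  have h5 : m = a k * t + omega1 k a (m % a k) := (Nat.sub_eq_iff_eq_add hle).mp ht
  exact ⟨t, h5.trans (by ring)⟩

lemma decomp2 {m : ℕ} (hk : 3 ≤ k) (ha0 : a 0 = 0) (hmono : ∀ i, i < k → a i < a (i+1))
    (hgcd : (Finset.Icc 1 k).gcd a = 1) (h : m ∈ S2 k a) :
    ∃ n2 : ℕ, m = omega2 k a (m % a k) + n2 * a k := by
  have hres : m % a k = (m % a k) % a k := (Nat.mod_mod_of_dvd m dvd_rfl).symm
  have hle : omega2 k a (m % a k) ≤ m := omega2_min h hres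
  have hmod : omega2 k a (m % a k) % a k = m % a k :=
    (omega2_mem hk ha0 hmono hgcd (m % a k)).2.trans hres.symm
  have hmeq : Nat.ModEq (a k) (omega2 k a (m % a k)) m := by
    unfold Nat.ModEq
    rw [hmod]
  obtain ⟨t, ht⟩ := (Nat.modEq_iff_dvd' hle).mp hmeq
  have h5 : m = a k * t + omega2 k a (m % a k) := (Nat.sub_eq_iff_eq_add hle).mp ht
  exact ⟨t, h5.trans (by ring)⟩

end Lemmas6

section Lemmas7
variable {k : ℕ} {a : ℕ → ℕ}

lemma omega1_congr {r r' : ℕ} (h : r % a k = r' % a k) :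
    omega1 k a r = omega1 k a r' := by
  unfold omega1; rw [h]

lemma omega2_congr {r r' : ℕ} (h : r % a k = r' % a k) :
    omega2 k a r = omega2 k a r' := by
  unfold omega2; rw [h]

lemma SS_iff' (hk : 3 ≤ k) (ha0 : a 0 = 0)
    (hmono : ∀ i, i < k → a i < a (i+1)) {u : ℕ × ℕ} :
    u ∈ S' k a \ S k a ↔ a k ∣ u.1 + u.2 ∧ u.1 ∈ S1 k a ∧ u.2 ∈ S2 k a ∧
      deg k a u < delta1 k a u.1 := by
  constructor
  · intro h
    obtain ⟨hdvd, h1, h2, hlt1, -⟩ := (SS_iff hk ha0 hmono).mp h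
    exact ⟨hdvd, h1, h2, hlt1⟩
  · rintro ⟨hdvd, h1, h2, hlt1⟩
    refine ⟨(mem_S'_iff hk ha0 hmono).mpr ⟨hdvd, h1, h2⟩, fun hS => ?_⟩
    obtain ⟨-, -, hle⟩ := (mem_S_iff1 hk ha0 hmono).mp hS
    omega

lemma part1 (hk : 3 ≤ k) (ha0 : a 0 = 0) (hmono : ∀ i, i < k → a i < a (i+1))
    (hgcd : (Finset.Icc 1 k).gcd a = 1) :
    ∀ i ∈ II k a, deg k a (w k a i) + 1 ≤ delta2 k a (w k a i).2 := by
  intro i hi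
  obtain ⟨hi1, hi2, -, hlt⟩ := hi
  have hd : 0 < a k := d_pos hk ha0 hmono
  have hik : i ≤ a k := by omega
  have hdvd := w_dvd hk ha0 hmono hgcd hik
  by_contra hcon
  have hle : delta2 k a (w k a i).2 ≤ deg k a (w k a i) := by omega
  have h2 : (w k a i).2 ∈ S2 k a := (omega2_mem hk ha0 hmono hgcd (a k - i)).1
  have hS : w k a i ∈ S k a := (mem_S_iff2 hk ha0 hmono).mpr ⟨hdvd, h2, hle⟩
  obtain ⟨-, -, hle1⟩ := (mem_S_iff1 hk ha0 hmono).mp hS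
  omega

lemma part2 (hk : 3 ≤ k) (ha0 : a 0 = 0) (hmono : ∀ i, i < k → a i < a (i+1))
    (hgcd : (Finset.Icc 1 k).gcd a = 1) :
    ∀ i ∈ II k a, ∀ n1 : ℕ, n1 + deg k a (w k a i) + 1 ≤ delta2 k a (w k a i).2 →
      deg k a (w k a i) + n1 + 1 ≤ delta1 k a (omega1 k a i + n1 * a k) := by
  intro i hi n1 hn1
  obtain ⟨hi1, hi2, -, hlt⟩ := hi
  have hd : 0 < a k := d_pos hk ha0 hmono
  have hik : i ≤ a k := by omega
  have hdvd := w_dvd hk ha0 hmono hgcd hik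
  set u : ℕ × ℕ := w k a i + (n1 * a k, 0 * a k) with hu
  have hdeg : deg k a u = deg k a (w k a i) + n1 := by
    rw [hu, deg_shift hk ha0 hmono hdvd n1 0]; ring
  have hu1 : u.1 = omega1 k a i + n1 * a k := rfl
  have hu2 : u.2 = (w k a i).2 + 0 * a k := rfl
  have hu2' : u.2 = (w k a i).2 := by rw [hu2]; ring
  have hdvdu : a k ∣ u.1 + u.2 := by
    rw [hu1, hu2']
    have heq : omega1 k a i + n1 * a k + (w k a i).2
        = ((w k a i).1 + (w k a i).2) + n1 * a k := by
      show omega1 k a i + n1 * a k + (w k a i).2 = (omega1 k a i + (w k a i).2) + n1 * a k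
      ring
    rw [heq]
    exact dvd_add hdvd (dvd_mul_left _ _)
  have hS1u : u.1 ∈ S1 k a := by
    rw [hu1]
    exact (S1_add_mul_d hk (omega1_mem hk ha0 hmono hgcd i).1 n1).1
  have hnotS : u ∉ S k a := by
    intro hS
    obtain ⟨-, -, hle2⟩ := (mem_S_iff2 hk ha0 hmono).mp hS
    rw [hu2', hdeg] at hle2
    omega
  have : ¬ (delta1 k a u.1 ≤ deg k a u) := by
    intro hle1
    exact hnotS ((mem_S_iff1 hk ha0 hmono).mpr ⟨hdvdu, hS1u, hle1⟩)
  rw [hu1, hdeg] at this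
  omega

end Lemmas7

section Lemmas8
variable {k : ℕ} {a : ℕ → ℕ}

lemma part3 (hk : 3 ≤ k) (ha0 : a 0 = 0) (hmono : ∀ i, i < k → a i < a (i+1))
    (hgcd : (Finset.Icc 1 k).gcd a = 1) :
    S' k a \ S k a =
      {u | ∃ i ∈ II k a, ∃ n1 n2 : ℕ,
        n1 + deg k a (w k a i) + 1 ≤ delta2 k a (w k a i).2 ∧
        n2 + deg k a (w k a i) + n1 + 1 ≤ delta1 k a (omega1 k a i + n1 * a k) ∧
        u = w k a i + (n1 * a k, n2 * a k)} := by
  have hd : 0 < a k := d_pos hk ha0 hmono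
  ext u
  simp only [Set.mem_setOf_eq]
  constructor
  · intro hu
    have hnotS : u ∉ S k a := hu.2
    obtain ⟨hdvd, h1, h2, hlt1⟩ := (SS_iff' hk ha0 hmono).mp hu
    have hlt2 : deg k a u < delta2 k a u.2 := by
      by_contra hcon
      exact hnotS ((mem_S_iff2 hk ha0 hmono).mpr ⟨hdvd, h2, by omega⟩)
    set i := u.1 % a k with hidef
    have hiltd : i < a k := Nat.mod_lt _ hd
    obtain ⟨n1, hn1⟩ := decomp1 hk ha0 hmono hgcd h1
    rw [← hidef] at hn1
    have hmod2 : u.2 % a k = (a k - i) % a k := by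
      have h0 : (u.1 + u.2) % a k = 0 := Nat.mod_eq_zero_of_dvd hdvd
      have hadd : (i + u.2 % a k) % a k = 0 := by
        rw [hidef, ← Nat.add_mod]; exact h0
      have hjlt : u.2 % a k < a k := Nat.mod_lt _ hd
      obtain ⟨c, hc⟩ := Nat.dvd_of_mod_eq_zero hadd
      have hc2 : c < 2 := by
        by_contra hcc
        push_neg at hcc
        have h2d : a k * 2 ≤ a k * c := Nat.mul_le_mul_left _ hcc
        omega
      interval_cases c
      · have h00 : i = 0 ∧ u.2 % a k = 0 := by omega
        rw [h00.2, h00.1, Nat.sub_zero, Nat.mod_self]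
      · have hi0 : 0 < i := by omega
        have hj : u.2 % a k = a k - i := by omega
        rw [hj, Nat.mod_eq_of_lt (by omega)]
    obtain ⟨n2, hn2⟩ := decomp2 hk ha0 hmono hgcd h2
    have homega : omega2 k a (u.2 % a k) = omega2 k a (a k - i) :=
      omega2_congr (by rw [Nat.mod_mod_of_dvd _ dvd_rfl, hmod2])
    rw [homega] at hn2
    have hw1 : (w k a i).1 = omega1 k a i := rfl
    have hmemw1 : omega1 k a i ∈ S1 k a := (omega1_mem hk ha0 hmono hgcd i).1
    have hmemw2 : omega2 k a (a k - i) ∈ S2 k a := (omega2_mem hk ha0 hmono hgcd (a k - i)).1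
    have hwdvd := w_dvd hk ha0 hmono hgcd (le_of_lt hiltd)
    have hueq : u = w k a i + (n1 * a k, n2 * a k) := by
      apply Prod.ext
      · show u.1 = omega1 k a i + n1 * a k
        exact hn1
      · show u.2 = omega2 k a (a k - i) + n2 * a k
        exact hn2
    have hdeg : deg k a u = deg k a (w k a i) + n1 + n2 := by
      rw [hueq, deg_shift hk ha0 hmono hwdvd]
    have hd1le : delta1 k a (omega1 k a i + n1 * a k) ≤ delta1 k a (omega1 k a i) + n1 :=
      (S1_add_mul_d hk hmemw1 n1).2
    have hd2le : delta2 k a (omega2 k a (a k - i) + n2 * a k)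
        ≤ delta2 k a (omega2 k a (a k - i)) + n2 :=
      (S2_add_mul_d hk ha0 hmemw2 n2).2
    rw [hn1] at hlt1
    rw [hn2] at hlt2
    rw [hdeg] at hlt1 hlt2
    have hIIlt : deg k a (w k a i) < delta1 k a (w k a i).1 := by
      rw [hw1]; omega
    have hi1 : 1 ≤ i := by
      rcases Nat.eq_zero_or_pos i with h0 | h
      · exfalso
        have hω0 : omega1 k a i ≤ 0 := by
          rw [h0]
          exact omega1_min zero_mem_S1 rfl
        have hωz : omega1 k a i = 0 := by omega
        have hδz : delta1 k a (omega1 k a i) = 0 := by rw [hωz, delta1_zero]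
        omega
      · exact h
    have hinot : ∀ j, 1 ≤ j → j ≤ k - 1 → i ≠ a j := by
      intro j hj1 hjk hija
      have hjk' : j ≤ k := by omega
      have hajlt : a j < a k := a_lt hmono (by omega) le_rfl
      have haj1 : 1 ≤ a j := by
        have := a_lt hmono (show 0 < j by omega) hjk'
        omega
      obtain ⟨hmem, hd1⟩ := single_mem_S1 hj1 hjk'
      have hωle : omega1 k a i ≤ a j := omega1_min hmem (by rw [hija])
      have hωmod := (omega1_mem hk ha0 hmono hgcd i).2
      have hωself : omega1 k a i % a k = omega1 k a i := Nat.mod_eq_of_lt (by omega)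
      have himod : i % a k = i := Nat.mod_eq_of_lt hiltd
      have hωeq : omega1 k a i = a j := by omega
      have hδ : delta1 k a (omega1 k a i) ≤ 1 := by rw [hωeq]; exact hd1
      have hdegw : deg k a (w k a i) = 0 := by
        rw [hw1] at hIIlt
        omega
      have hlt : (w k a i).1 + (w k a i).2 < a k := by
        by_contra hge
        push_neg at hge
        have h1d : 1 ≤ ((w k a i).1 + (w k a i).2) / a k := (Nat.one_le_div_iff hd).mpr hge
        rw [deg] at hdegw
        omega
      have h00 : (w k a i).1 + (w k a i).2 = 0 := Nat.eq_zero_of_dvd_of_lt hwdvd hlt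
      have : (w k a i).1 = 0 := by omega
      rw [hw1] at this
      omega
    refine ⟨i, ⟨hi1, by omega, hinot, hIIlt⟩, n1, n2, ?_, ?_, hueq⟩
    · show n1 + deg k a (w k a i) + 1 ≤ delta2 k a (omega2 k a (a k - i))
      omega
    · omega
  · rintro ⟨i, ⟨hi1, hi2, -, hlt⟩, n1, n2, hc1, hc2, hueq⟩
    have hik : i ≤ a k := by omega
    have hwdvd := w_dvd hk ha0 hmono hgcd hik
    have hmemw1 := (omega1_mem hk ha0 hmono hgcd i).1
    have hmemw2 := (omega2_mem hk ha0 hmono hgcd (a k - i)).1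
    rw [SS_iff' hk ha0 hmono]
    have hu1 : u.1 = omega1 k a i + n1 * a k := by rw [hueq]; rfl
    have hu2 : u.2 = omega2 k a (a k - i) + n2 * a k := by rw [hueq]; rfl
    have hdeg : deg k a u = deg k a (w k a i) + n1 + n2 := by
      rw [hueq, deg_shift hk ha0 hmono hwdvd]
    refine ⟨?_, ?_, ?_, ?_⟩
    · rw [hu1, hu2]
      have heq : omega1 k a i + n1 * a k + (omega2 k a (a k - i) + n2 * a k)
          = ((w k a i).1 + (w k a i).2) + (n1 + n2) * a k := by
        show _ = (omega1 k a i + omega2 k a (a k - i)) + (n1 + n2) * a k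
        ring
      rw [heq]
      exact dvd_add hwdvd (dvd_mul_left _ _)
    · rw [hu1]
      exact (S1_add_mul_d hk hmemw1 n1).1
    · rw [hu2]
      exact (S2_add_mul_d hk ha0 hmemw2 n2).1
    · rw [hu1, hdeg]
      omega
end Lemmas8

theorem statement_10 (k : ℕ) (a : ℕ → ℕ) (hk : 3 ≤ k) (ha0 : a 0 = 0)
    (hmono : ∀ i, i < k → a i < a (i+1)) (hgcd : (Finset.Icc 1 k).gcd a = 1)
    (hne : (S' k a \ S k a).Nonempty) :
    (∀ i ∈ II k a, deg k a (w k a i) + 1 ≤ delta2 k a (w k a i).2) ∧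
    (∀ i ∈ II k a, ∀ n1 : ℕ, n1 + deg k a (w k a i) + 1 ≤ delta2 k a (w k a i).2 →
      deg k a (w k a i) + n1 + 1 ≤ delta1 k a (omega1 k a i + n1 * a k)) ∧
    (S' k a \ S k a =
      {u | ∃ i ∈ II k a, ∃ n1 n2 : ℕ,
        n1 + deg k a (w k a i) + 1 ≤ delta2 k a (w k a i).2 ∧
        n2 + deg k a (w k a i) + n1 + 1 ≤ delta1 k a (omega1 k a i + n1 * a k) ∧
        u = w k a i + (n1 * a k, n2 * a k)}) ∧
    (sSup {m | ∃ u ∈ S' k a \ S k a, m = deg k a u} =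
      sSup {m | ∃ i ∈ II k a, ∃ n1 : ℕ,
        n1 + deg k a (w k a i) + 1 ≤ delta2 k a (w k a i).2 ∧
        m = deg k a (w k a i + (n1 * a k,
          (delta1 k a (omega1 k a i + n1 * a k) - (deg k a (w k a i) + n1 + 1)) * a k))}) ∧
    ((S' k a \ S k a).ncard =
      {u | ∃ i ∈ II k a, ∃ n1 n2 : ℕ,
        n1 + deg k a (w k a i) + 1 ≤ delta2 k a (w k a i).2 ∧
        n2 + deg k a (w k a i) + n1 + 1 ≤ delta1 k a (omega1 k a i + n1 * a k) ∧
        u = w k a i + (n1 * a k, n2 * a k)}.ncard) := by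
  have hd : 0 < a k := d_pos hk ha0 hmono
  have h3 := part3 hk ha0 hmono hgcd
  have h1 := part1 hk ha0 hmono hgcd
  have h2 := part2 hk ha0 hmono hgcd
  refine ⟨h1, h2, h3, ?_, by rw [h3]⟩
  set set1 := {m | ∃ u ∈ S' k a \ S k a, m = deg k a u} with hs1
  set set2 := {m | ∃ i ∈ II k a, ∃ n1 : ℕ,
        n1 + deg k a (w k a i) + 1 ≤ delta2 k a (w k a i).2 ∧
        m = deg k a (w k a i + (n1 * a k,
          (delta1 k a (omega1 k a i + n1 * a k) - (deg k a (w k a i) + n1 + 1)) * a k))}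
    with hs2
  have hsub : set2 ⊆ set1 := by
    rintro m ⟨i, hiII, n1, hc1, rfl⟩
    refine ⟨w k a i + (n1 * a k,
      (delta1 k a (omega1 k a i + n1 * a k) - (deg k a (w k a i) + n1 + 1)) * a k), ?_, rfl⟩
    rw [h3]
    refine ⟨i, hiII, n1, _, hc1, ?_, rfl⟩
    have := h2 i hiII n1 hc1
    omega
  have hbdd : BddAbove set1 := by
    refine ⟨(Finset.range (a k)).sup
      (fun i => delta1 k a (omega1 k a i) + delta2 k a (omega2 k a (a k - i))), ?_⟩
    rintro m ⟨u, hu, rfl⟩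
    rw [h3] at hu
    obtain ⟨i, hiII, n1, n2, hc1, hc2, hueq⟩ := hu
    have hi1 : 1 ≤ i := hiII.1
    have hi2 : i ≤ a k - 1 := hiII.2.1
    have hik : i ≤ a k := by omega
    have hwdvd := w_dvd hk ha0 hmono hgcd hik
    have hdeg : deg k a u = deg k a (w k a i) + n1 + n2 := by
      rw [hueq, deg_shift hk ha0 hmono hwdvd]
    have hd1le := (S1_add_mul_d hk (omega1_mem hk ha0 hmono hgcd i).1 n1).2
    have hle : deg k a u
        ≤ delta1 k a (omega1 k a i) + delta2 k a (omega2 k a (a k - i)) := by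
      have e2 : n1 + deg k a (w k a i) + 1 ≤ delta2 k a (omega2 k a (a k - i)) := hc1
      have e1 : n2 + deg k a (w k a i) + n1 + 1 ≤ delta1 k a (omega1 k a i) + n1 :=
        le_trans hc2 hd1le
      omega
    have hilt : i < a k := by omega
    exact le_trans hle (Finset.le_sup
      (f := fun i => delta1 k a (omega1 k a i) + delta2 k a (omega2 k a (a k - i)))
      (Finset.mem_range.mpr hilt))
  have hbdd2 : BddAbove set2 := BddAbove.mono hsub hbdd
  obtain ⟨u0, hu0⟩ := hne
  have hne1 : set1.Nonempty := ⟨deg k a u0, u0, hu0, rfl⟩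
  have hu0' := hu0
  rw [h3] at hu0'
  obtain ⟨i0, hi0II, n10, n20, hc10, hc20, hueq0⟩ := hu0'
  have hne2 : set2.Nonempty := ⟨_, i0, hi0II, n10, hc10, rfl⟩
  apply le_antisymm
  · apply csSup_le hne1
    rintro m ⟨u, hu, rfl⟩
    rw [h3] at hu
    obtain ⟨i, hiII, n1, n2, hc1, hc2, hueq⟩ := hu
    have hi1 : 1 ≤ i := hiII.1
    have hi2 : i ≤ a k - 1 := hiII.2.1
    have hik : i ≤ a k := by omega
    have hwdvd := w_dvd hk ha0 hmono hgcd hik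
    set N2 := delta1 k a (omega1 k a i + n1 * a k) - (deg k a (w k a i) + n1 + 1) with hN2
    have hdegu : deg k a u = deg k a (w k a i) + n1 + n2 := by
      rw [hueq, deg_shift hk ha0 hmono hwdvd]
    have hdegv : deg k a (w k a i + (n1 * a k, N2 * a k))
        = deg k a (w k a i) + n1 + N2 := deg_shift hk ha0 hmono hwdvd n1 N2
    have hmem2 : deg k a (w k a i + (n1 * a k, N2 * a k)) ∈ set2 :=
      ⟨i, hiII, n1, hc1, rfl⟩
    have hmle : deg k a u ≤ deg k a (w k a i + (n1 * a k, N2 * a k)) := by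
      rw [hdegu, hdegv]
      omega
    exact le_trans hmle (le_csSup hbdd2 hmem2)
  · apply csSup_le hne2
    intro m hm
    exact le_csSup hbdd (hsub hm)
end ProjMonomialCurve
end

section
/- Assume k < d, a₁ = 1 and a_{k−1} = d − 1, and let ε := max{i ≥ 1 : 1, …, i and d−i, …, d−1 all belong to {a₁,…,a_{k−1}}}. Then reg ≤ ⌊(λ_max − 1)/ε⌋ + 2. -/
namespace ProjMonomialCurve

/-- The set `A₁ = {a 0, a 1, …, a k}`. -/
lemma zero_mem_S (k : ℕ) (a : ℕ → ℕ) : (0 : ℕ × ℕ) ∈ S k a :=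
  ⟨fun _ => 0, by simp⟩

lemma add_mem_S {k : ℕ} {a : ℕ → ℕ} {u v : ℕ × ℕ} (hu : u ∈ S k a) (hv : v ∈ S k a) :
    u + v ∈ S k a := by
  obtain ⟨x, hx⟩ := hu
  obtain ⟨y, hy⟩ := hv
  exact ⟨x + y, by simp [hx, hy, add_smul, Finset.sum_add_distrib]⟩

lemma gen_mem_S {k : ℕ} {a : ℕ → ℕ} {j : ℕ} (hj : j ≤ k) : e k a (a j) ∈ S k a := by
  refine ⟨fun i => if i = j then 1 else 0, ?_⟩
  rw [Finset.sum_eq_single j]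
  · simp
  · intro b _ hb; simp [hb]
  · intro h; exact absurd (Finset.mem_range.2 (by omega)) h

lemma listsum_mem_S {k : ℕ} {a : ℕ → ℕ} (l : List (ℕ × ℕ)) (h : ∀ v ∈ l, v ∈ S k a) :
    l.sum ∈ S k a := by
  induction l with
  | nil => simpa using zero_mem_S k a
  | cons x t ih =>
      rw [List.sum_cons]
      exact add_mem_S (h x (by simp)) (ih (fun v hv => h v (by simp [hv])))

lemma map_e_sum {k : ℕ} {a : ℕ → ℕ} (l : List ℕ) (h : ∀ v ∈ l, v ≤ a k) :
    l.sum ≤ l.length * a k ∧ (l.map (e k a)).sum = (l.sum, l.length * a k - l.sum) := by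
  induction l with
  | nil => simp; rfl
  | cons x t ih =>
      obtain ⟨h1, h2⟩ := ih (fun v hv => h v (by simp [hv]))
      have hx : x ≤ a k := h x (by simp)
      constructor
      · simp only [List.sum_cons, List.length_cons]
        nlinarith
      · simp only [List.map_cons, List.sum_cons, h2, List.length_cons, e, Prod.mk_add_mk]
        have : (t.length + 1) * a k = t.length * a k + a k := by ring
        refine Prod.ext rfl ?_
        simp only [this]
        omega

lemma S_sum_div {k : ℕ} {a : ℕ → ℕ} (hmono : ∀ i j, i ≤ j → j ≤ k → a i ≤ a j)
    {v : ℕ × ℕ} (hv : v ∈ S k a) : a k ∣ v.1 + v.2 := by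
  obtain ⟨x, hx⟩ := hv
  refine ⟨∑ i ∈ Finset.range (k+1), x i, ?_⟩
  have h1 : v.1 = ∑ i ∈ Finset.range (k+1), x i * a i := by
    rw [hx, Prod.fst_sum]; simp [e]
  have h2 : v.2 = ∑ i ∈ Finset.range (k+1), x i * (a k - a i) := by
    rw [hx, Prod.snd_sum]; simp [e]
  rw [h1, h2, ← Finset.sum_add_distrib, Finset.mul_sum]
  refine Finset.sum_congr rfl (fun i hi => ?_)
  have hik : a i ≤ a k := hmono i k (by simpa using Nat.lt_succ_iff.mp (Finset.mem_range.mp hi)) le_rfl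
  have := Nat.mul_sub (x i) (a k) (a i)
  have hle : x i * a i ≤ x i * a k := Nat.mul_le_mul_left _ hik
  have hcomm : a k * x i = x i * a k := Nat.mul_comm _ _
  omega


section
variable {k : ℕ} {a : ℕ → ℕ}

lemma mono_of (hmono : ∀ i, i < k → a i < a (i+1)) :
    ∀ i j, i ≤ j → j ≤ k → a i ≤ a j := by
  intro i j hij hjk
  induction j with
  | zero => have : i = 0 := by omega
            rw [this]
  | succ n ih =>
      rcases Nat.lt_succ_iff_lt_or_eq.mp (Nat.lt_succ_of_le hij) with h | h
      · exact le_of_lt (lt_of_le_of_lt (ih (by omega) (by omega)) (hmono n (by omega)))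
      · rw [h]

lemma key_rep (hmono : ∀ i, i < k → a i < a (i+1)) (ha0 : a 0 = 0) (ha1 : a 1 = 1)
    (hk : 3 ≤ k) (hkd : k < a k)
    (E : ℕ) (hE1 : 1 ≤ E)
    (hEprop : ∀ x, 1 ≤ x → x ≤ E →
      (∃ j, 1 ≤ j ∧ j ≤ k - 1 ∧ a j = x) ∧ (∃ j, 1 ≤ j ∧ j ≤ k - 1 ∧ a j = a k - x))
    (lam : ℕ) (hlam : ∀ j, 1 ≤ j → j ≤ k → a j - a (j-1) - 1 ≤ lam)
    (m n : ℕ) (hm : (lam - 1) / E + 2 ≤ m) (hn : n ≤ m * a k) :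
    ∃ l : List ℕ, (∀ v ∈ l, ∃ j ≤ k, a j = v) ∧ l.length ≤ m ∧ l.sum = n := by
  have hmle : ∀ i j, i ≤ j → j ≤ k → a i ≤ a j := mono_of hmono
  set d := a k with hd
  have hd0 : 0 < d := by omega
  obtain ⟨q, r, hqr, hrd⟩ : ∃ q r, n = q * d + r ∧ r < d :=
    ⟨n / d, n % d, by rw [Nat.mul_comm]; exact (Nat.div_add_mod n d).symm, Nat.mod_lt _ hd0⟩
  rcases Nat.eq_zero_or_pos r with hr0 | hr1
  · -- r = 0
    have hq : q ≤ m := by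
      have : q * d ≤ m * d := by omega
      exact Nat.le_of_mul_le_mul_right this hd0
    refine ⟨List.replicate q d, ?_, by simpa using hq, ?_⟩
    · intro v hv
      rw [List.eq_of_mem_replicate hv]
      exact ⟨k, le_rfl, rfl⟩
    · simp [List.sum_replicate, smul_eq_mul]; omega
  · -- r ≥ 1
    have hqm : q + 1 ≤ m := by
      rcases Nat.lt_or_ge q m with h | h
      · omega
      · exfalso; nlinarith
    -- find the gap
    set F := (Finset.Icc 1 (k-1)).filter (fun j => a j ≤ r) with hF
    have h1F : 1 ∈ F := by
      simp only [hF, Finset.mem_filter, Finset.mem_Icc]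
      exact ⟨⟨le_rfl, by omega⟩, by omega⟩
    set j := F.max' ⟨1, h1F⟩ with hjdef
    have hjF : j ∈ F := F.max'_mem _
    simp only [hF, Finset.mem_filter, Finset.mem_Icc] at hjF
    obtain ⟨⟨hj1, hjk⟩, hjr⟩ := hjF
    have hjk' : j + 1 ≤ k := by omega
    have hr2 : r < a (j+1) := by
      by_contra h
      push_neg at h
      rcases Nat.lt_or_ge (j+1) k with hlt | hge
      · have : j + 1 ∈ F := by
          simp only [hF, Finset.mem_filter, Finset.mem_Icc]
          exact ⟨⟨by omega, by omega⟩, h⟩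
        have := Finset.le_max' F (j+1) this
        omega
      · have hjk2 : j + 1 = k := by omega
        rw [hjk2] at h
        omega
    set t := r - a j with ht
    set t' := a (j+1) - r with ht'
    have htt' : t + t' = a (j+1) - a j := by omega
    have hlamj : a (j+1) - a j - 1 ≤ lam := by
      have := hlam (j+1) (by omega) hjk'
      simpa using this
    rcases Nat.eq_zero_or_pos t with ht0 | ht1
    · -- r = a j
      refine ⟨List.replicate q d ++ [a j], ?_, by simp; omega, ?_⟩
      · intro v hv
        simp only [List.mem_append, List.mem_singleton] at hv
        rcases hv with hv | hv
        · rw [List.eq_of_mem_replicate hv]; exact ⟨k, le_rfl, rfl⟩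
        · exact ⟨j, by omega, hv.symm⟩
      · simp [List.sum_replicate, smul_eq_mul]; omega
    · -- t ≥ 1, t' ≥ 1
      have ht'1 : 1 ≤ t' := by omega
      have hEd : E ≤ d - 1 := by
        obtain ⟨jx, hjx1, hjx2, hjxv⟩ := (hEprop E hE1 le_rfl).1
        have h1 := hmle jx (k-1) hjx2 (by omega)
        have h3 := hmono (k-1) (by omega)
        have hkk : k - 1 + 1 = k := by omega
        rw [hkk] at h3
        have h4 := hmle (k-1) (k-1) le_rfl (by omega)
        omega
      have hsplit : ∀ u : ℕ, 1 ≤ u → ∃ c, 1 ≤ c ∧ c ≤ E ∧ u = ((u-1)/E) * E + c := by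
        intro u hu
        have h1 := Nat.div_add_mod (u-1) E
        have h2 : (u-1) % E < E := Nat.mod_lt _ (by omega)
        have hco : E * ((u-1)/E) = ((u-1)/E) * E := Nat.mul_comm _ _
        exact ⟨(u-1) % E + 1, by omega, by omega, by omega⟩
      rcases Nat.lt_or_ge q ((t'-1)/E + 1) with hqB | hqB
      · -- small case: q ≤ (t'-1)/E
        obtain ⟨c', hc'1, hc'E, hteq⟩ := hsplit t ht1
        set s := (t - 1) / E with hs
        obtain ⟨jE', hjE'1, hjE'2, hjE'v⟩ := (hEprop E hE1 le_rfl).1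
        obtain ⟨jc', hjc'1, hjc'2, hjc'v⟩ := (hEprop c' hc'1 hc'E).1
        refine ⟨List.replicate q d ++ [a j] ++ List.replicate s E ++ [c'], ?_, ?_, ?_⟩
        · intro v hv
          simp only [List.mem_append, List.mem_singleton] at hv
          rcases hv with ((hv | hv) | hv) | hv
          · rw [List.eq_of_mem_replicate hv]; exact ⟨k, le_rfl, rfl⟩
          · exact ⟨j, by omega, hv.symm⟩
          · rw [List.eq_of_mem_replicate hv]; exact ⟨jE', by omega, hjE'v⟩
          · exact ⟨jc', by omega, by rw [hjc'v, hv]⟩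
        · -- length
          simp only [List.length_append, List.length_replicate, List.length_singleton]
          have hdiv : (t-1)/E + (t'-1)/E ≤ ((t-1)+(t'-1))/E := Nat.add_div_le_add_div _ _ _
          have hsub : (t-1)+(t'-1) ≤ lam - 1 := by omega
          have hdiv2 : ((t-1)+(t'-1))/E ≤ (lam-1)/E := Nat.div_le_div_right hsub
          omega
        · simp only [List.sum_append, List.sum_replicate, smul_eq_mul, List.sum_singleton]
          omega
      · -- large case: q ≥ (t'-1)/E + 1
        obtain ⟨c, hc1, hcE, ht'eq⟩ := hsplit t' ht'1
        set B := (t' - 1) / E with hB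
        obtain ⟨jE, hjE1, hjE2, hjEv⟩ := (hEprop E hE1 le_rfl).2
        obtain ⟨jc, hjc1, hjc2, hjcv⟩ := (hEprop c hc1 hcE).2
        have hmulsub : B * (d - E) = B * d - B * E := Nat.mul_sub B d E
        have hBle : B * E ≤ B * d := Nat.mul_le_mul_left _ (by omega)
        set Q := q - (B + 1) with hQ
        have hqd : q * d = B * d + d + Q * d := by
          have hq' : q = B + 1 + Q := by omega
          rw [hq']; ring
        refine ⟨[a (j+1)] ++ List.replicate B (d - E) ++ [d - c] ++ List.replicate Q d,
          ?_, ?_, ?_⟩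
        · intro v hv
          simp only [List.mem_append, List.mem_singleton] at hv
          rcases hv with ((hv | hv) | hv) | hv
          · exact ⟨j+1, hjk', hv.symm⟩
          · rw [List.eq_of_mem_replicate hv]; exact ⟨jE, by omega, hjEv⟩
          · exact ⟨jc, by omega, by rw [hjcv, hv]⟩
          · rw [List.eq_of_mem_replicate hv]; exact ⟨k, le_rfl, rfl⟩
        · simp only [List.length_append, List.length_replicate, List.length_singleton]
          omega
        · simp only [List.sum_append, List.sum_replicate, smul_eq_mul, List.sum_singleton]
          omega


lemma mem_S_of_rep (hmono' : ∀ i j, i ≤ j → j ≤ k → a i ≤ a j) (ha0 : a 0 = 0)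
    {m : ℕ} {u : ℕ × ℕ} (hu : u.1 + u.2 = m * a k)
    (l : List ℕ) (hl : ∀ v ∈ l, ∃ j ≤ k, a j = v) (hlen : l.length ≤ m) (hsum : l.sum = u.1) :
    u ∈ S k a := by
  set L := l ++ List.replicate (m - l.length) 0 with hL
  have hLv : ∀ v ∈ L, ∃ j ≤ k, a j = v := by
    intro v hv
    rcases List.mem_append.mp hv with h | h
    · exact hl v h
    · rw [List.eq_of_mem_replicate h]; exact ⟨0, by omega, ha0⟩
  have hLlen : L.length = m := by simp [hL]; omega
  have hLsum : L.sum = u.1 := by simp [hL, hsum]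
  have hle : ∀ v ∈ L, v ≤ a k := by
    intro v hv; obtain ⟨j, hj, hjv⟩ := hLv v hv; rw [← hjv]; exact hmono' j k hj le_rfl
  obtain ⟨h1, h2⟩ := map_e_sum L hle
  have hrep : u = (L.map (e k a)).sum := by
    rw [h2, hLlen, hLsum]
    exact Prod.ext rfl (by omega)
  rw [hrep]
  refine listsum_mem_S _ (fun v hv => ?_)
  obtain ⟨w, hw, rfl⟩ := List.mem_map.mp hv
  obtain ⟨j, hj, hjv⟩ := hLv w hw
  rw [← hjv]; exact gen_mem_S hj

end

theorem statement_13 (k : ℕ) (a : ℕ → ℕ) (hk : 3 ≤ k) (ha0 : a 0 = 0)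
    (hmono : ∀ i, i < k → a i < a (i+1)) (hgcd : (Finset.Icc 1 k).gcd a = 1)
    (hkd : k < a k) (ha1 : a 1 = 1) (hak1 : a (k-1) = a k - 1) :
    reg k a ≤
      (((lamMax k a - 1) /
        sSup {i | 1 ≤ i ∧ ∀ x, 1 ≤ x → x ≤ i →
          (∃ j, 1 ≤ j ∧ j ≤ k - 1 ∧ a j = x) ∧
          (∃ j, 1 ≤ j ∧ j ≤ k - 1 ∧ a j = a k - x)} : ℕ) : ℤ) + 2 := by
  by_contra hcon
  push_neg at hcon
  have hmle : ∀ i j, i ≤ j → j ≤ k → a i ≤ a j := mono_of hmono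
  have hd0 : 0 < a k := by omega
  set E := sSup {i | 1 ≤ i ∧ ∀ x, 1 ≤ x → x ≤ i →
      (∃ j, 1 ≤ j ∧ j ≤ k - 1 ∧ a j = x) ∧
      (∃ j, 1 ≤ j ∧ j ≤ k - 1 ∧ a j = a k - x)} with hE
  have hne : ({i | 1 ≤ i ∧ ∀ x, 1 ≤ x → x ≤ i →
      (∃ j, 1 ≤ j ∧ j ≤ k - 1 ∧ a j = x) ∧
      (∃ j, 1 ≤ j ∧ j ≤ k - 1 ∧ a j = a k - x)} : Set ℕ).Nonempty := by
    refine ⟨1, le_rfl, fun x h1 hx => ?_⟩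
    have hx1 : x = 1 := le_antisymm hx h1
    subst hx1
    exact ⟨⟨1, le_rfl, by omega, ha1⟩, ⟨k-1, by omega, le_rfl, hak1⟩⟩
  have hbdd : BddAbove {i | 1 ≤ i ∧ ∀ x, 1 ≤ x → x ≤ i →
      (∃ j, 1 ≤ j ∧ j ≤ k - 1 ∧ a j = x) ∧
      (∃ j, 1 ≤ j ∧ j ≤ k - 1 ∧ a j = a k - x)} := by
    refine ⟨a k, fun i hi => ?_⟩
    obtain ⟨j, hj1, hj2, hji⟩ := (hi.2 i hi.1 le_rfl).1
    rw [← hji]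
    exact hmle j k (by omega) le_rfl
  obtain ⟨hE1, hEprop⟩ : 1 ≤ E ∧ ∀ x, 1 ≤ x → x ≤ E →
      (∃ j, 1 ≤ j ∧ j ≤ k - 1 ∧ a j = x) ∧
      (∃ j, 1 ≤ j ∧ j ≤ k - 1 ∧ a j = a k - x) := Nat.sSup_mem hne hbdd
  have hlam : ∀ j, 1 ≤ j → j ≤ k → a j - a (j-1) - 1 ≤ lamMax k a := by
    intro j h1 h2
    exact Finset.le_sup (f := fun i => a i - a (i-1) - 1) (Finset.mem_Icc.mpr ⟨h1, h2⟩)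
  set M := (lamMax k a - 1) / E + 2 with hM
  have hgoal : reg k a ≤ (M : ℤ) := by
    have hub : ∀ z ∈ ({z : ℤ | ∃ u ∈ S' k a \ S k a, z = (deg k a u : ℤ) + 1} ∪
        {z : ℤ | ∃ u ∈ T k a, z = degZ k a u + 2}), z ≤ (M : ℤ) := by
      rintro z (⟨u, hu, rfl⟩ | ⟨u, hu, rfl⟩)
      · -- u ∈ S' \ S
        by_contra hz
        push_neg at hz
        have hMdeg : M ≤ deg k a u := by
          have : (M : ℤ) < (deg k a u : ℤ) + 1 := hz
          exact_mod_cast by omega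
        obtain ⟨p, h0, _⟩ := hu.1
        have hsum0 := S_sum_div hmle h0
        have he0 : (u + p • e k a 0).1 + (u + p • e k a 0).2 = u.1 + u.2 + p * a k := by
          simp [e, Prod.ext_iff]
          ring
        rw [he0] at hsum0
        have hdvd : a k ∣ u.1 + u.2 := by
          have h2 : a k ∣ p * a k := Dvd.intro_left p rfl
          have := Nat.dvd_sub hsum0 h2
          simpa using this
        have hdeg : deg k a u * a k = u.1 + u.2 := Nat.div_mul_cancel hdvd
        have hn : u.1 ≤ deg k a u * a k := by omega
        obtain ⟨l, hl, hlen, hsum⟩ := key_rep hmono ha0 ha1 hk hkd E hE1 hEprop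
          (lamMax k a) hlam (deg k a u) u.1 (by omega) hn
        exact hu.2 (mem_S_of_rep hmle ha0 hdeg.symm l hl hlen hsum)
      · -- u ∈ T
        obtain ⟨hdvd, hu1, hu2⟩ := hu
        have hS1 : ∀ nn : ℕ, nn ∈ S1 k a := by
          intro nn
          refine ⟨fun i => if i = 1 then nn else 0, ?_⟩
          rw [Finset.sum_eq_single 1]
          · simp [ha1]
          · intro b _ hb; simp [hb]
          · intro h; exact absurd (Finset.mem_Icc.mpr ⟨le_rfl, by omega⟩) h
        have hS2 : ∀ nn : ℕ, nn ∈ S2 k a := by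
          intro nn
          refine ⟨fun i => if i = k - 1 then nn else 0, ?_⟩
          rw [Finset.sum_eq_single (k-1)]
          · have h1 : a k - a (k - 1) = 1 := by omega
            simp [h1]
          · intro b _ hb; simp [hb]
          · intro h; exact absurd (Finset.mem_range.mpr (by omega)) h
        have hu1' : u.1 < 0 := by
          by_contra h
          push_neg at h
          exact hu1 u.1.toNat (hS1 _) (Int.toNat_of_nonneg h)
        have hu2' : u.2 < 0 := by
          by_contra h
          push_neg at h
          exact hu2 u.2.toNat (hS2 _) (Int.toNat_of_nonneg h)
        obtain ⟨c, hc⟩ := hdvd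
        have hcneg : c ≤ -1 := by nlinarith [hc, hu1', hu2', hd0]
        have hdegZ : degZ k a u = c := by
          rw [degZ, hc, Int.mul_ediv_cancel_left _ (by exact_mod_cast hd0.ne')]
        rw [hdegZ]
        have : (2 : ℤ) ≤ (M : ℤ) := by exact_mod_cast Nat.le_add_left 2 _
        omega
    rw [reg]
    rcases Set.eq_empty_or_nonempty ({z : ℤ | ∃ u ∈ S' k a \ S k a, z = (deg k a u : ℤ) + 1} ∪
        {z : ℤ | ∃ u ∈ T k a, z = degZ k a u + 2}) with hemp | hne2
    · rw [hemp, Int.csSup_empty]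
      positivity
    · exact csSup_le hne2 hub
  refine absurd hgoal (not_le.mpr ?_)
  calc (M : ℤ) = (((lamMax k a - 1) / E : ℕ) : ℤ) + 2 := by rw [hM]; push_cast; ring
    _ < reg k a := hcon


end ProjMonomialCurve
end

section
/- Assume a₁ = 1, a₂ = 2, …, a_p = p and a_{p+1} ≥ p + 2 for some 1 ≤ p ≤ k − 1, and let λ := a_{p+1} − p − 1 (the first non-zero gap). Then reg ≥ ⌈λ/p⌉ + 1 = ⌊(λ−1)/p⌋ + 2. -/
namespace ProjMonomialCurve

lemma aux_sum3 {M : Type*} [AddCommMonoid M] (s : Finset ℕ) {i₁ i₂ i₃ : ℕ}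
    (h₁ : i₁ ∈ s) (h₂ : i₂ ∈ s) (h₃ : i₃ ∈ s)
    (h₁₂ : i₁ ≠ i₂) (h₁₃ : i₁ ≠ i₃) (h₂₃ : i₂ ≠ i₃)
    (c₁ c₂ c₃ : ℕ) (g : ℕ → M) :
    ∑ t ∈ s, (if t = i₁ then c₁ else if t = i₂ then c₂ else if t = i₃ then c₃ else 0) • g t
      = c₁ • g i₁ + c₂ • g i₂ + c₃ • g i₃ := by
  classical
  have hsub : ({i₁, i₂, i₃} : Finset ℕ) ⊆ s := by
    intro t ht
    simp only [Finset.mem_insert, Finset.mem_singleton] at ht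
    rcases ht with rfl | rfl | rfl <;> assumption
  rw [← Finset.sum_subset hsub (fun t _ hnot => by
    simp only [Finset.mem_insert, Finset.mem_singleton, not_or] at hnot
    simp [hnot.1, hnot.2.1, hnot.2.2])]
  rw [Finset.sum_insert (by simp [h₁₂, h₁₃]), Finset.sum_insert (by simp [h₂₃]),
    Finset.sum_singleton]
  simp [Ne.symm h₁₂, Ne.symm h₁₃, Ne.symm h₂₃, add_assoc]

lemma aux_sum3' (s : Finset ℕ) {i₁ i₂ i₃ : ℕ}
    (h₁ : i₁ ∈ s) (h₂ : i₂ ∈ s) (h₃ : i₃ ∈ s)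
    (h₁₂ : i₁ ≠ i₂) (h₁₃ : i₁ ≠ i₃) (h₂₃ : i₂ ≠ i₃)
    (c₁ c₂ c₃ : ℕ) (g : ℕ → ℕ) :
    ∑ t ∈ s, (if t = i₁ then c₁ else if t = i₂ then c₂ else if t = i₃ then c₃ else 0) * g t
      = c₁ * g i₁ + c₂ * g i₂ + c₃ * g i₃ := by
  simpa [smul_eq_mul] using aux_sum3 s h₁ h₂ h₃ h₁₂ h₁₃ h₂₃ c₁ c₂ c₃ g

lemma fst_S_sum (k : ℕ) (a : ℕ → ℕ) (x : ℕ → ℕ) :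
    (∑ i ∈ Finset.range (k+1), x i • e k a (a i)).1 = ∑ i ∈ Finset.range (k+1), x i * a i := by
  rw [Prod.fst_sum]; simp [e]

lemma snd_S_sum (k : ℕ) (a : ℕ → ℕ) (x : ℕ → ℕ) :
    (∑ i ∈ Finset.range (k+1), x i • e k a (a i)).2 =
      ∑ i ∈ Finset.range (k+1), x i * (a k - a i) := by
  rw [Prod.snd_sum]; simp [e]

lemma mem_S_iff (k : ℕ) (a : ℕ → ℕ) (u : ℕ × ℕ) :
    u ∈ S k a ↔ ∃ x : ℕ → ℕ, u.1 = ∑ i ∈ Finset.range (k+1), x i * a i ∧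
      u.2 = ∑ i ∈ Finset.range (k+1), x i * (a k - a i) := by
  constructor
  · rintro ⟨x, rfl⟩
    exact ⟨x, fst_S_sum k a x, snd_S_sum k a x⟩
  · rintro ⟨x, h1, h2⟩
    exact ⟨x, Prod.ext_iff.mpr ⟨by rw [fst_S_sum]; exact h1, by rw [snd_S_sum]; exact h2⟩⟩

lemma sum_coords (k : ℕ) (a : ℕ → ℕ) (s : Finset ℕ) (hs : ∀ i ∈ s, a i ≤ a k) (x : ℕ → ℕ) :
    ∑ i ∈ s, x i * a i + ∑ i ∈ s, x i * (a k - a i) = (∑ i ∈ s, x i) * a k := by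
  rw [← Finset.sum_add_distrib, Finset.sum_mul]
  apply Finset.sum_congr rfl
  intro i hi
  rw [← Nat.mul_add, Nat.add_sub_cancel' (hs i hi)]


lemma mem_S_of (k : ℕ) (a : ℕ → ℕ) {A B : ℕ} (x : ℕ → ℕ)
    (h1 : A = ∑ i ∈ Finset.range (k+1), x i * a i)
    (h2 : B = ∑ i ∈ Finset.range (k+1), x i * (a k - a i)) :
    ((A, B) : ℕ × ℕ) ∈ S k a :=
  ⟨x, Prod.ext_iff.mpr ⟨by rw [fst_S_sum]; exact h1, by rw [snd_S_sum]; exact h2⟩⟩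


lemma amono_aux {k : ℕ} {a : ℕ → ℕ} (hmono : ∀ i, i < k → a i < a (i+1)) :
    ∀ i j, i ≤ j → j ≤ k → a i ≤ a j := by
  have amono : ∀ n i, i + n ≤ k → a i ≤ a (i + n) := by
    intro n
    induction n with
    | zero => intro i _; exact le_rfl
    | succ m ih =>
      intro i h
      have h1 := ih i (by omega)
      have h2 := hmono (i + m) (by omega)
      exact le_trans h1 (le_of_lt h2)
  intro i j hij hjk
  have := amono (j - i) i (by omega)
  rwa [Nat.add_sub_cancel' hij] at this

lemma bdd_lemma (k : ℕ) (a : ℕ → ℕ) (hk : 3 ≤ k) (ha0 : a 0 = 0) (ha1 : a 1 = 1)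
    (hmono : ∀ i, i < k → a i < a (i+1)) (hak3 : 3 ≤ a k)
    (hS1 : ∀ n : ℕ, n ∈ S1 k a) (hS2big : ∀ n : ℕ, a k * a k ≤ n → n ∈ S2 k a) :
    BddAbove ({z : ℤ | ∃ u ∈ S' k a \ S k a, z = (deg k a u : ℤ) + 1} ∪
        {z : ℤ | ∃ u ∈ T k a, z = degZ k a u + 2}) := by
  have amono' := amono_aux hmono
  have hak0 : 0 < a k := by omega
  refine ⟨(a k : ℤ) * a k + 2, ?_⟩
  rintro z (⟨u, hu, rfl⟩ | ⟨u, huT, rfl⟩)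
  · obtain ⟨u₁, u₂⟩ := u
    obtain ⟨huS', hunotS⟩ := hu
    obtain ⟨P, hP1, hP2⟩ := huS'
    rw [show ((u₁,u₂) : ℕ×ℕ) + P • e k a 0 = (u₁, u₂ + P * a k) by
      simp [e, Prod.ext_iff]] at hP1
    rw [show ((u₁,u₂) : ℕ×ℕ) + P • e k a (a k) = (u₁ + P * a k, u₂) by
      simp [e, Prod.ext_iff]] at hP2
    obtain ⟨x, hx1, hx2⟩ := (mem_S_iff k a _).mp hP1
    obtain ⟨y, hy1, hy2⟩ := (mem_S_iff k a _).mp hP2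
    have hx1' : u₁ = ∑ i ∈ Finset.range (k+1), x i * a i := hx1
    have hx2' : u₂ + P * a k = ∑ i ∈ Finset.range (k+1), x i * (a k - a i) := hx2
    have hy2' : u₂ = ∑ i ∈ Finset.range (k+1), y i * (a k - a i) := hy2
    have hmemk : ∀ i ∈ Finset.range (k+1), a i ≤ a k := fun i hi =>
      amono' i k (by have := Finset.mem_range.mp hi; omega) le_rfl
    have hcc := sum_coords k a (Finset.range (k+1)) hmemk x
    have hsum : u₁ + (u₂ + P * a k) = (∑ i ∈ Finset.range (k+1), x i) * a k := by
      rw [hx1', hx2']; exact hcc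
    have hPX : P ≤ ∑ i ∈ Finset.range (k+1), x i := by
      by_contra hc
      push_neg at hc
      have h5 : (∑ i ∈ Finset.range (k+1), x i) * a k < P * a k :=
        Nat.mul_lt_mul_of_lt_of_le hc le_rfl hak0
      linarith only [hsum, h5]
    obtain ⟨m, hmX⟩ : ∃ m, ∑ i ∈ Finset.range (k+1), x i = m + P :=
      ⟨(∑ i ∈ Finset.range (k+1), x i) - P, by omega⟩
    have hXm : (∑ i ∈ Finset.range (k+1), x i) * a k = m * a k + P * a k := by
      rw [hmX]; ring
    have hmd : u₁ + u₂ = m * a k := by linarith only [hsum, hXm]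
    have hdegm : deg k a (u₁, u₂) = m := by
      show (u₁ + u₂) / a k = m
      rw [hmd, Nat.mul_div_assoc m (dvd_refl (a k)), Nat.div_self hak0, mul_one]
    have hy2'' : u₂ = ∑ i ∈ Finset.range k, y i * (a k - a i) := by
      rw [hy2', Finset.sum_range_succ, Nat.sub_self, mul_zero, add_zero]
    have hmemk' : ∀ i ∈ Finset.range k, a i ≤ a k := fun i hi =>
      amono' i k (by have := Finset.mem_range.mp hi; omega) le_rfl
    have hsu : (∑ i ∈ Finset.range k, y i) ≤ u₂ := by
      rw [hy2'']
      apply Finset.sum_le_sum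
      intro i hi
      have hik : i < k := Finset.mem_range.mp hi
      have h1 : a i < a k := by
        have h2 := amono' i (k-1) (by omega) (by omega)
        have h3 := hmono (k-1) (by omega)
        have hkk : k - 1 + 1 = k := by omega
        rw [hkk] at h3
        omega
      calc y i = y i * 1 := (mul_one _).symm
        _ ≤ y i * (a k - a i) := Nat.mul_le_mul_left _ (by omega)
    have hNs : (∑ i ∈ Finset.range k, y i * a i) + u₂ =
        (∑ i ∈ Finset.range k, y i) * a k := by
      nth_rewrite 1 [hy2'']
      exact sum_coords k a (Finset.range k) hmemk' y
    have hms : m + 1 ≤ ∑ i ∈ Finset.range k, y i := by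
      by_contra hc
      push_neg at hc
      apply hunotS
      refine mem_S_of k a (fun t => if t = k then m - (∑ i ∈ Finset.range k, y i) else y t) ?_ ?_
      · show u₁ = ∑ i ∈ Finset.range (k+1),
          (if i = k then m - (∑ i ∈ Finset.range k, y i) else y i) * a i
        have hcong : ∑ i ∈ Finset.range k,
            (if i = k then m - (∑ j ∈ Finset.range k, y j) else y i) * a i
            = ∑ i ∈ Finset.range k, y i * a i :=
          Finset.sum_congr rfl (fun i hi => by
            have := Finset.mem_range.mp hi
            rw [if_neg (by omega)])
        rw [Finset.sum_range_succ, hcong, if_pos rfl]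
        have hsub : (m - (∑ i ∈ Finset.range k, y i)) * a k
            + (∑ i ∈ Finset.range k, y i) * a k = m * a k := by
          rw [← Nat.add_mul]; congr 1; omega
        linarith only [hNs, hmd, hsub]
      · show u₂ = ∑ i ∈ Finset.range (k+1),
          (if i = k then m - (∑ i ∈ Finset.range k, y i) else y i) * (a k - a i)
        have hcong : ∑ i ∈ Finset.range k,
            (if i = k then m - (∑ j ∈ Finset.range k, y j) else y i) * (a k - a i)
            = ∑ i ∈ Finset.range k, y i * (a k - a i) :=
          Finset.sum_congr rfl (fun i hi => by
            have := Finset.mem_range.mp hi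
            rw [if_neg (by omega)])
        rw [Finset.sum_range_succ, hcong, if_pos rfl, Nat.sub_self, mul_zero, add_zero]
        exact hy2''
    obtain ⟨t, r, hrt, hr2⟩ : ∃ t r, u₁ = a k * t + r ∧ r < a k :=
      ⟨u₁ / a k, u₁ % a k, (Nat.div_add_mod _ _).symm, Nat.mod_lt _ hak0⟩
    have hmtr : m + 1 ≤ t + r := by
      by_contra hc
      push_neg at hc
      apply hunotS
      refine mem_S_of k a
        (fun tt => if tt = 1 then r else if tt = k then t else if tt = 0 then m - (t + r) else 0) ?_ ?_
      · show u₁ = ∑ i ∈ Finset.range (k+1),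
          (if i = 1 then r else if i = k then t else if i = 0 then m - (t + r) else 0) * a i
        rw [aux_sum3' (Finset.range (k+1)) (Finset.mem_range.mpr (by omega))
          (Finset.mem_range.mpr (by omega)) (Finset.mem_range.mpr (by omega))
          (by omega) (by omega) (by omega), ha1, ha0, mul_one, mul_zero, add_zero]
        linarith only [hrt]
      · show u₂ = ∑ i ∈ Finset.range (k+1),
          (if i = 1 then r else if i = k then t else if i = 0 then m - (t + r) else 0) * (a k - a i)
        rw [aux_sum3' (Finset.range (k+1)) (Finset.mem_range.mpr (by omega))
          (Finset.mem_range.mpr (by omega)) (Finset.mem_range.mpr (by omega))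
          (by omega) (by omega) (by omega), ha1, ha0, Nat.sub_zero, Nat.sub_self, mul_zero]
        have hsub1 : r * (a k - 1) + r * 1 = r * a k := by
          rw [← Nat.mul_add]; congr 1; omega
        have hsub2 : (m - (t + r)) * a k + (t + r) * a k = m * a k := by
          rw [← Nat.add_mul]; congr 1; omega
        have hring : (t + r) * a k = t * a k + r * a k := by ring
        linarith only [hmd, hrt, hsub1, hsub2, hring]
    rw [hdegm]
    have hA : (m+1) * a k ≤ (t+r) * a k := Nat.mul_le_mul_right _ hmtr
    have hB : (r+1) * a k ≤ a k * a k := Nat.mul_le_mul_right _ hr2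
    have hA' : m * a k + a k ≤ t * a k + r * a k := by
      have e1 : (m+1)*a k = m * a k + a k := by ring
      have e2 : (t+r)*a k = t * a k + r * a k := by ring
      linarith only [hA, e1, e2]
    have hB' : r * a k + a k ≤ a k * a k := by
      have e3 : (r+1)*a k = r * a k + a k := by ring
      linarith only [hB, e3]
    have hfin : m + 1 ≤ a k * a k := by linarith only [hms, hsu, hmd, hrt, hA', hB']
    have hZ : ((m:ℤ)+1) ≤ (a k:ℤ) * a k := by exact_mod_cast hfin
    linarith only [hZ]
  · obtain ⟨hdvd, hn1, hn2⟩ := huT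
    have h1 : u.1 ≤ -1 := by
      by_contra hc
      push_neg at hc
      have h0 : (0:ℤ) ≤ u.1 := by omega
      have h2 := hn1 u.1.toNat (hS1 _)
      rw [Int.toNat_of_nonneg h0] at h2
      exact h2 rfl
    have haknn : (0:ℤ) ≤ (a k:ℤ) := by positivity
    have h2 : u.2 ≤ (a k : ℤ) * a k := by
      by_contra hc
      push_neg at hc
      have h0 : (0:ℤ) ≤ u.2 := by nlinarith
      have hle : a k * a k ≤ u.2.toNat := by
        have h3 : ((a k * a k : ℕ) : ℤ) ≤ u.2 := by push_cast; linarith only [hc]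
        omega
      have h4 := hn2 _ (hS2big _ hle)
      rw [Int.toNat_of_nonneg h0] at h4
      exact h4 rfl
    have hd1 : u.1 + u.2 ≤ (a k:ℤ) * a k := by linarith only [h1, h2]
    have hdeg2 : degZ k a u ≤ (a k : ℤ) := by
      show (u.1 + u.2) / (a k : ℤ) ≤ (a k : ℤ)
      calc (u.1 + u.2) / (a k : ℤ) ≤ ((a k : ℤ) * a k) / (a k : ℤ) :=
            Int.ediv_le_ediv (by exact_mod_cast hak0) hd1
        _ = (a k : ℤ) := Int.mul_ediv_cancel_left _ (by exact_mod_cast hak0.ne')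
    have h5 : (a k : ℤ) ≤ (a k:ℤ) * a k := by nlinarith
    linarith only [hdeg2, h5]

lemma case2_lemma (k : ℕ) (a : ℕ → ℕ) (p E R : ℕ) (hk : 3 ≤ k) (ha0 : a 0 = 0)
    (ha1 : a 1 = 1) (hmono : ∀ i, i < k → a i < a (i+1))
    (hp1 : 1 ≤ p) (hpk1 : p + 1 ≤ k) (hap : ∀ i, 1 ≤ i → i ≤ p → a i = i)
    (hqp : a (p+1) = (E+1)*p + R + 2)
    (hall : ∀ g : ℕ, E * a k + 1 ≤ g → g ∈ S2 k a) :
    ∃ u ∈ S' k a \ S k a, deg k a u = E + 1 := by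
  have amono' := amono_aux hmono
  have hapk : a (p+1) ≤ a k := amono' (p+1) k hpk1 le_rfl
  have hak0 : 0 < a k := by omega
  have hqd : (E+1)*p + 2 ≤ a k := by linarith only [hqp, hapk]
  have hQak : (E+1) * a k = E * a k + a k := by ring
  have hle1 : (E+1)*p + 1 ≤ (E+1) * a k := by linarith only [hqd, hQak, Nat.zero_le (E * a k)]
  obtain ⟨U, hU⟩ : ∃ U, U + ((E+1)*p+1) = (E+1) * a k :=
    ⟨(E+1) * a k - ((E+1)*p+1), Nat.sub_add_cancel hle1⟩
  have hUge : E * a k + 1 ≤ U := by linarith only [hU, hQak, hqd]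
  obtain ⟨y, hy⟩ := hall U hUge
  have hmemk : ∀ i ∈ Finset.range (k+1), a i ≤ a k := fun i hi =>
    amono' i k (by have := Finset.mem_range.mp hi; omega) le_rfl
  have hmemk' : ∀ i ∈ Finset.range k, a i ≤ a k := fun i hi =>
    amono' i k (by have := Finset.mem_range.mp hi; omega) le_rfl
  have hyc : (∑ i ∈ Finset.range k, y i * a i) + U =
      (∑ i ∈ Finset.range k, y i) * a k := by
    nth_rewrite 1 [hy]
    exact sum_coords k a (Finset.range k) hmemk' y
  have hunotS : (((E+1)*p+1, U) : ℕ × ℕ) ∉ S k a := by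
    intro hmem
    obtain ⟨x, hx1, hx2⟩ := (mem_S_iff k a _).mp hmem
    have hx1' : (E+1)*p+1 = ∑ i ∈ Finset.range (k+1), x i * a i := hx1
    have hx2' : U = ∑ i ∈ Finset.range (k+1), x i * (a k - a i) := hx2
    have hcc := sum_coords k a (Finset.range (k+1)) hmemk x
    have hXak : (∑ i ∈ Finset.range (k+1), x i) * a k = (E+1) * a k := by
      linarith only [hcc, hx1', hx2', hU]
    have hX : (∑ i ∈ Finset.range (k+1), x i) = E+1 :=
      Nat.eq_of_mul_eq_mul_right hak0 hXak
    by_cases hex : ∀ i ∈ Finset.range (k+1), p + 1 ≤ i → x i = 0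
    · have hle : ∑ i ∈ Finset.range (k+1), x i * a i
          ≤ ∑ i ∈ Finset.range (k+1), x i * p := by
        apply Finset.sum_le_sum
        intro i hi
        rcases le_or_gt i p with hip | hip
        · apply Nat.mul_le_mul_left
          rcases Nat.eq_zero_or_pos i with h0 | h0
          · rw [h0, ha0]; omega
          · rw [hap i h0 hip]
            exact hip
        · rw [hex i hi (by omega)]; simp
      rw [← Finset.sum_mul, hX] at hle
      linarith only [hle, hx1']
    · push_neg at hex
      obtain ⟨i, hi, hip, hxi⟩ := hex
      have hik : i ≤ k := by have := Finset.mem_range.mp hi; omega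
      have h1 : a (p+1) ≤ a i := amono' (p+1) i hip hik
      have h2 : a i ≤ x i * a i := Nat.le_mul_of_pos_left _ (by omega)
      have h3 : x i * a i ≤ ∑ j ∈ Finset.range (k+1), x j * a j :=
        Finset.single_le_sum (f := fun j => x j * a j) (fun j _ => Nat.zero_le _) hi
      linarith only [hqp, h1, h2, h3, hx1']
  have huS' : (((E+1)*p+1, U) : ℕ × ℕ) ∈ S' k a := by
    refine ⟨(E+1)*p + 1 + (∑ i ∈ Finset.range k, y i), ?_, ?_⟩
    · rw [show (((E+1)*p+1, U) : ℕ × ℕ) + ((E+1)*p + 1 + (∑ i ∈ Finset.range k, y i)) • e k a 0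
          = ((E+1)*p+1, U + ((E+1)*p + 1 + (∑ i ∈ Finset.range k, y i)) * a k) by
        simp [e, Prod.ext_iff]]
      refine mem_S_of k a (fun t => if t = 1 then (E+1)*p+1
        else if t = 0 then (E+1) + (∑ i ∈ Finset.range k, y i) else if t = 2 then 0 else 0) ?_ ?_
      · show (E+1)*p+1 = ∑ i ∈ Finset.range (k+1),
          (if i = 1 then (E+1)*p+1 else if i = 0 then (E+1) + (∑ j ∈ Finset.range k, y j)
            else if i = 2 then 0 else 0) * a i
        rw [aux_sum3' (Finset.range (k+1)) (Finset.mem_range.mpr (by omega))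
          (Finset.mem_range.mpr (by omega)) (Finset.mem_range.mpr (by omega))
          (by omega) (by omega) (by omega), ha1, ha0]
        simp
      · show U + ((E+1)*p + 1 + (∑ i ∈ Finset.range k, y i)) * a k
          = ∑ i ∈ Finset.range (k+1),
            (if i = 1 then (E+1)*p+1 else if i = 0 then (E+1) + (∑ j ∈ Finset.range k, y j)
              else if i = 2 then 0 else 0) * (a k - a i)
        rw [aux_sum3' (Finset.range (k+1)) (Finset.mem_range.mpr (by omega))
          (Finset.mem_range.mpr (by omega)) (Finset.mem_range.mpr (by omega))
          (by omega) (by omega) (by omega), ha1, ha0, Nat.sub_zero]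
        simp only [zero_mul, add_zero]
        have hsubr : ((E+1)*p+1)*(a k - 1) + ((E+1)*p+1)*1 = ((E+1)*p+1)*(a k) := by
          rw [← Nat.mul_add]; congr 1; omega
        have hE1 : ((E+1)*p+1+(∑ i ∈ Finset.range k, y i))*(a k)
            = ((E+1)*p+1)*(a k) + (∑ i ∈ Finset.range k, y i)*(a k) := by ring
        have hE2 : ((E+1)+(∑ i ∈ Finset.range k, y i))*(a k)
            = (E+1)*(a k) + (∑ i ∈ Finset.range k, y i)*(a k) := by ring
        linarith only [hU, hsubr, hE1, hE2]
    · rw [show (((E+1)*p+1, U) : ℕ × ℕ) + ((E+1)*p + 1 + (∑ i ∈ Finset.range k, y i)) • e k a (a k)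
          = ((E+1)*p+1 + ((E+1)*p + 1 + (∑ i ∈ Finset.range k, y i)) * a k, U) by
        simp [e, Prod.ext_iff]]
      refine mem_S_of k a (fun t => if t = k then (E+1)*p+1+(E+1) else y t) ?_ ?_
      · show (E+1)*p+1 + ((E+1)*p + 1 + (∑ i ∈ Finset.range k, y i)) * a k
          = ∑ i ∈ Finset.range (k+1), (if i = k then (E+1)*p+1+(E+1) else y i) * a i
        have hcong : ∑ i ∈ Finset.range k,
            (if i = k then (E+1)*p+1+(E+1) else y i) * a i
            = ∑ i ∈ Finset.range k, y i * a i :=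
          Finset.sum_congr rfl (fun i hi => by
            have := Finset.mem_range.mp hi
            rw [if_neg (by omega)])
        rw [Finset.sum_range_succ, hcong, if_pos rfl]
        have hE1 : ((E+1)*p+1+(∑ i ∈ Finset.range k, y i))*(a k)
            = ((E+1)*p+1)*(a k) + (∑ i ∈ Finset.range k, y i)*(a k) := by ring
        have hE3 : ((E+1)*p+1+(E+1))*(a k)
            = ((E+1)*p+1)*(a k) + (E+1)*(a k) := by ring
        linarith only [hyc, hU, hE1, hE3]
      · show U = ∑ i ∈ Finset.range (k+1),
          (if i = k then (E+1)*p+1+(E+1) else y i) * (a k - a i)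
        have hcong : ∑ i ∈ Finset.range k,
            (if i = k then (E+1)*p+1+(E+1) else y i) * (a k - a i)
            = ∑ i ∈ Finset.range k, y i * (a k - a i) :=
          Finset.sum_congr rfl (fun i hi => by
            have := Finset.mem_range.mp hi
            rw [if_neg (by omega)])
        rw [Finset.sum_range_succ, hcong, if_pos rfl, Nat.sub_self, mul_zero, add_zero]
        exact hy
  refine ⟨((E+1)*p+1, U), ⟨huS', hunotS⟩, ?_⟩
  show ((E+1)*p+1 + U) / a k = E + 1
  rw [show (E+1)*p+1+U = (E+1)*(a k) by linarith only [hU],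
    Nat.mul_div_assoc (E+1) (dvd_refl (a k)), Nat.div_self hak0, mul_one]

theorem statement_14 (k : ℕ) (a : ℕ → ℕ) (hk : 3 ≤ k) (ha0 : a 0 = 0)
    (hmono : ∀ i, i < k → a i < a (i+1)) (hgcd : (Finset.Icc 1 k).gcd a = 1)
    (p : ℕ) (hp1 : 1 ≤ p) (hpk : p ≤ k - 1)
    (hap : ∀ i, 1 ≤ i → i ≤ p → a i = i) (hap1 : p + 2 ≤ a (p+1)) :
    reg k a ≥ ⌈((a (p+1) - p - 1 : ℕ) : ℚ) / (p : ℚ)⌉ + 1 ∧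
    ⌈((a (p+1) - p - 1 : ℕ) : ℚ) / (p : ℚ)⌉ + 1 =
      ⌊(((a (p+1) - p - 1 : ℕ) : ℚ) - 1) / (p : ℚ)⌋ + 2 := by
  classical
  have hpk1 : p + 1 ≤ k := by omega
  have ha1 : a 1 = 1 := hap 1 le_rfl hp1
  have amono' := amono_aux hmono
  have hapk : a (p+1) ≤ a k := amono' (p+1) k hpk1 le_rfl
  have hak3 : 3 ≤ a k := by omega
  have hak0 : 0 < a k := by omega
  obtain ⟨l, hl⟩ : ∃ l, a (p+1) = l + p + 2 := ⟨a (p+1) - p - 2, by omega⟩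
  have hlam : a (p+1) - p - 1 = l + 1 := by omega
  obtain ⟨E, R, hpd, hmod⟩ : ∃ E R, p * E + R = l ∧ R < p :=
    ⟨l / p, l % p, Nat.div_add_mod l p, Nat.mod_lt l (by omega)⟩
  have hp0 : (0:ℚ) < (p:ℚ) := by exact_mod_cast hp1
  have hpdq : (p:ℚ) * E + R = l := by exact_mod_cast hpd
  have hmodq : (R:ℚ) + 1 ≤ p := by exact_mod_cast hmod
  have hceil : ⌈((a (p+1) - p - 1 : ℕ) : ℚ) / (p : ℚ)⌉ = (E : ℤ) + 1 := by
    rw [hlam, Int.ceil_eq_iff]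
    constructor
    · rw [lt_div_iff₀ hp0]; push_cast; nlinarith
    · rw [div_le_iff₀ hp0]; push_cast; nlinarith
  have hfloor : ⌊(((a (p+1) - p - 1 : ℕ) : ℚ) - 1) / (p : ℚ)⌋ = (E : ℤ) := by
    rw [hlam, Int.floor_eq_iff]
    constructor
    · rw [le_div_iff₀ hp0]; push_cast; nlinarith
    · rw [div_lt_iff₀ hp0]; push_cast; nlinarith
  refine ⟨?_, by rw [hceil, hfloor]; ring⟩
  rw [ge_iff_le, hceil]
  have hS1 : ∀ n : ℕ, n ∈ S1 k a := by
    intro n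
    refine ⟨fun t => if t = 1 then n else if t = 2 then 0 else if t = 3 then 0 else 0, ?_⟩
    show n = ∑ i ∈ Finset.Icc 1 k,
      (if i = 1 then n else if i = 2 then 0 else if i = 3 then 0 else 0) * a i
    rw [aux_sum3' (Finset.Icc 1 k) (Finset.mem_Icc.mpr (by omega))
      (Finset.mem_Icc.mpr (by omega)) (Finset.mem_Icc.mpr (by omega))
      (by omega) (by omega) (by omega)]
    simp [ha1]
  have hS2big : ∀ n : ℕ, a k * a k ≤ n → n ∈ S2 k a := by
    intro n hn
    obtain ⟨t, r, hrt, hr2⟩ : ∃ t r, n = a k * t + r ∧ r < a k :=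
      ⟨n / a k, n % a k, (Nat.div_add_mod n (a k)).symm, Nat.mod_lt _ hak0⟩
    obtain ⟨Cc, Ee, hCE⟩ : ∃ Cc Ee : ℕ, n = Ee * a k + Cc * (a k - 1) := by
      rcases Nat.eq_zero_or_pos r with hr0 | hr0
      · exact ⟨0, t, by rw [hrt, hr0]; ring⟩
      · obtain ⟨D, hD⟩ : ∃ D, a k = D + 1 := ⟨a k - 1, by omega⟩
        have hADD : a k * D + a k = a k * a k := by rw [hD]; ring
        have hdt : a k * D < a k * t := by linarith only [hADD, hn, hrt, hr2]
        have htD : D < t := Nat.lt_of_mul_lt_mul_left hdt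
        refine ⟨D + 1 - r, t + r - D, ?_⟩
        have h1 : (n:ℤ) = (a k : ℤ) * t + r := by exact_mod_cast hrt
        have h2 : ((a k : ℕ):ℤ) = (D:ℤ) + 1 := by exact_mod_cast hD
        zify [show D ≤ t + r by omega, show r ≤ D + 1 by omega,
          show (1:ℕ) ≤ a k by omega]
        linear_combination h1 - h2
    refine ⟨fun i => if i = 0 then Ee else if i = 1 then Cc else if i = 2 then 0 else 0, ?_⟩
    show n = ∑ i ∈ Finset.range k,
      (if i = 0 then Ee else if i = 1 then Cc else if i = 2 then 0 else 0) * (a k - a i)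
    rw [aux_sum3' (Finset.range k) (Finset.mem_range.mpr (by omega))
      (Finset.mem_range.mpr (by omega)) (Finset.mem_range.mpr (by omega))
      (by omega) (by omega) (by omega)]
    rw [ha0, ha1, Nat.sub_zero]
    simpa using hCE
  have hbdd := bdd_lemma k a hk ha0 ha1 hmono hak3 hS1 hS2big
  show (E:ℤ) + 1 + 1 ≤ reg k a
  unfold reg
  by_cases hall : ∀ g : ℕ, E * a k + 1 ≤ g → g ∈ S2 k a
  · have hqp : a (p+1) = (E+1)*p + R + 2 := by
      have h : (E+1)*p = p*E + p := by ring
      linarith only [hl, hpd, h]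
    obtain ⟨u, hu, hdeg⟩ := case2_lemma k a p E R hk ha0 ha1 hmono hp1 hpk1 hap hqp hall
    refine le_csSup hbdd (Or.inl ⟨u, hu, ?_⟩)
    rw [hdeg]
    push_cast
    ring
  · push_neg at hall
    obtain ⟨g, hg1, hg2⟩ := hall
    have hgz : ((E:ℤ) * (a k : ℤ)) + 1 ≤ (g:ℤ) := by exact_mod_cast hg1
    refine le_csSup hbdd (Or.inr ⟨((E:ℤ) * (a k:ℤ) - g, (g:ℤ)), ⟨?_, ?_, ?_⟩, ?_⟩)
    · exact ⟨(E:ℤ), by push_cast; ring⟩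
    · intro n _ hne
      have hne' : (n:ℤ) = (E:ℤ) * (a k:ℤ) - g := hne
      have hn0 : (0:ℤ) ≤ (n:ℤ) := Int.natCast_nonneg n
      rw [hne'] at hn0
      linarith only [hn0, hgz]
    · intro n hn hne
      apply hg2
      have hne' : (n:ℤ) = (g:ℤ) := hne
      have : n = g := by exact_mod_cast hne'
      rwa [this] at hn
    · show (E:ℤ) + 1 + 1 = ((E:ℤ) * (a k:ℤ) - g + g) / (a k : ℤ) + 2
      rw [show ((E:ℤ) * (a k:ℤ) - g + g) = (a k : ℤ) * E by ring,
        Int.mul_ediv_cancel_left _ (by exact_mod_cast hak0.ne' : (a k : ℤ) ≠ 0)]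
      ring

end ProjMonomialCurve
end
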